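/- arXiv:1303.6351 — 2 statements merged into one kernel-verified Lean document; each statement's English description precedes it below -/
import Mathlib

section
/- (Calderón–Zygmund decomposition.) Let Q be a cube in ℝ^n, let f ∈ L¹(Q), and let M ≥ (1/|Q|) ∫_Q |f|. Then there exists a countable collection {Q_j} of pairwise disjoint open subcubes of Q such that |f(x)| ≤ M for almost every x ∈ Q \ ⋃_j Q_j, and M < (1/|Q_j|) ∫_{Q_j} |f(x)| dx ≤ 2^n M for every j; consequently Σ_j |Q_j| ≤ (1/M) ∫_Q |f|. -/
open MeasureTheory ENNReal Metric SchwartzMap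
open scoped FourierTransform SchwartzMap

/-- The (closed) cube in `ℝⁿ` with corner `a` and side length `l`. -/
def cube {n : ℕ} (a : Fin n → ℝ) (l : ℝ) : Set (EuclideanSpace ℝ (Fin n)) :=
  {x | ∀ i, x i ∈ Set.Icc (a i) (a i + l)}

/-- The mean oscillation of `f` over the cube with corner `a` and side length `l`. -/
noncomputable def oscAvg {n : ℕ} (f : EuclideanSpace ℝ (Fin n) → ℝ) (a : Fin n → ℝ) (l : ℝ) : ℝ :=
  ⨍ x in cube a l, |f x - ⨍ y in cube a l, f y|

/-- The BMO seminorm: the supremum of mean oscillations over all cubes. -/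
noncomputable def bmoSeminorm {n : ℕ} (f : EuclideanSpace ℝ (Fin n) → ℝ) : ℝ :=
  sSup {r : ℝ | ∃ a l, 0 < l ∧ r = oscAvg f a l}

namespace CZ
variable {n : ℕ}


def ocube (b : Fin n → ℝ) (m : ℝ) : Set (EuclideanSpace ℝ (Fin n)) :=
  {x | ∀ i, x i ∈ Set.Ioo (b i) (b i + m)}

lemma isClosed_cube (b : Fin n → ℝ) (m : ℝ) : IsClosed (cube b m) := by
  have : cube b m = ⋂ i, (fun x : EuclideanSpace ℝ (Fin n) => x i) ⁻¹' Set.Icc (b i) (b i + m) := by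
    ext x; simp [cube, Set.mem_iInter]
  rw [this]
  exact isClosed_iInter fun i => (isClosed_Icc).preimage (by fun_prop)

lemma isOpen_ocube (b : Fin n → ℝ) (m : ℝ) : IsOpen (ocube b m) := by
  have : ocube b m = ⋂ i, (fun x : EuclideanSpace ℝ (Fin n) => x i) ⁻¹' Set.Ioo (b i) (b i + m) := by
    ext x; simp [ocube, Set.mem_iInter]
  rw [this]
  exact isOpen_iInter_of_finite fun i => (isOpen_Ioo).preimage (by fun_prop)

lemma ocube_subset (b : Fin n → ℝ) (m : ℝ) : ocube b m ⊆ cube b m :=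
  fun x hx i => Set.Ioo_subset_Icc_self (hx i)

lemma volume_coe (s : Set (Fin n → ℝ)) (hs : MeasurableSet s) :
    volume (WithLp.ofLp ⁻¹' s : Set (EuclideanSpace ℝ (Fin n))) = volume s := by
  have h := (EuclideanSpace.volume_preserving_symm_measurableEquiv_toLp (Fin n)).measure_preimage
    hs.nullMeasurableSet
  exact h

lemma volume_cube (b : Fin n → ℝ) {m : ℝ} (hm : 0 ≤ m) :
    volume (cube b m) = ENNReal.ofReal m ^ n := by
  have h1 : cube b m = WithLp.ofLp ⁻¹' (Set.univ.pi fun i => Set.Icc (b i) (b i + m) : Set (Fin n → ℝ)) := by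
    ext x
    exact ⟨fun h i _ => h i, fun h i => h i (Set.mem_univ i)⟩
  rw [h1, volume_coe _ (MeasurableSet.univ_pi fun i => measurableSet_Icc), volume_pi_pi]
  simp [Real.volume_Icc, hm, Finset.prod_const]

lemma volume_ocube (b : Fin n → ℝ) {m : ℝ} (hm : 0 ≤ m) :
    volume (ocube b m) = ENNReal.ofReal m ^ n := by
  have h1 : ocube b m = WithLp.ofLp ⁻¹' (Set.univ.pi fun i => Set.Ioo (b i) (b i + m) : Set (Fin n → ℝ)) := by
    ext x
    exact ⟨fun h i _ => h i, fun h i => h i (Set.mem_univ i)⟩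
  rw [h1, volume_coe _ (MeasurableSet.univ_pi fun i => measurableSet_Ioo), volume_pi_pi]
  simp [Real.volume_Ioo, hm]

lemma volume_hyperplane (i : Fin n) (t : ℝ) :
    volume {x : EuclideanSpace ℝ (Fin n) | x i = t} = 0 := by
  have h2 := volume_coe (n := n) {x : Fin n → ℝ | x i = t}
    ((measurableSet_singleton t).preimage (measurable_pi_apply i))
  refine h2.trans ?_
  rw [MeasureTheory.volume_pi]
  exact MeasureTheory.Measure.pi_hyperplane (fun _ : Fin n => (volume : Measure ℝ)) i t

lemma cube_diff_ocube_null (b : Fin n → ℝ) (m : ℝ) :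
    volume (cube b m \ ocube b m) = 0 := by
  have hsub : cube b m \ ocube b m ⊆
      ⋃ i, ({x : EuclideanSpace ℝ (Fin n) | x i = b i} ∪ {x | x i = b i + m}) := by
    intro x hx
    obtain ⟨h1, h2⟩ := hx
    simp only [ocube, Set.mem_setOf_eq] at h2
    push_neg at h2
    obtain ⟨i, hi⟩ := h2
    rw [Set.mem_Ioo, not_and_or] at hi
    refine Set.mem_iUnion.2 ⟨i, ?_⟩
    rcases hi with hi | hi
    · exact Or.inl (le_antisymm (not_lt.1 hi) (h1 i).1)
    · exact Or.inr (le_antisymm (h1 i).2 (not_lt.1 hi))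
  refine measure_mono_null hsub ?_
  refine (measure_iUnion_null fun i => ?_)
  exact measure_union_null (volume_hyperplane i (b i)) (volume_hyperplane i (b i + m))

lemma restrict_cube_eq (b : Fin n → ℝ) (m : ℝ) :
    volume.restrict (cube b m) = volume.restrict (ocube b m) := by
  refine MeasureTheory.Measure.restrict_congr_set ?_
  rw [MeasureTheory.ae_eq_set]
  constructor
  · exact cube_diff_ocube_null b m
  · exact measure_mono_null (Set.diff_subset_diff_left (ocube_subset b m))
      (by simp)

lemma volume_ocube_eq_cube (b : Fin n → ℝ) (m : ℝ) :
    volume (ocube b m) = volume (cube b m) := by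
  have h1 : volume (cube b m) ≤ volume (ocube b m) + volume (cube b m \ ocube b m) := by
    refine (measure_mono ?_).trans (measure_union_le _ _)
    intro x hx; by_cases h : x ∈ ocube b m
    · exact Or.inl h
    · exact Or.inr ⟨hx, h⟩
  rw [cube_diff_ocube_null, add_zero] at h1
  exact le_antisymm (measure_mono (ocube_subset b m)) h1


noncomputable def side (l : ℝ) (k : ℕ) : ℝ := l / 2 ^ k
noncomputable def corner (a : Fin n → ℝ) (l : ℝ) (k : ℕ) (v : Fin n → ℕ) : Fin n → ℝ :=
  fun i => a i + side l k * v i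
noncomputable def dy (a : Fin n → ℝ) (l : ℝ) (k : ℕ) (v : Fin n → ℕ) :
    Set (EuclideanSpace ℝ (Fin n)) := cube (corner a l k v) (side l k)
noncomputable def dyo (a : Fin n → ℝ) (l : ℝ) (k : ℕ) (v : Fin n → ℕ) :
    Set (EuclideanSpace ℝ (Fin n)) := ocube (corner a l k v) (side l k)
noncomputable def idx (a : Fin n → ℝ) (l : ℝ) (x : EuclideanSpace ℝ (Fin n)) (k : ℕ) :
    Fin n → ℕ := fun i => ⌊(x i - a i) / side l k⌋₊

variable {a : Fin n → ℝ} {l : ℝ}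

lemma side_pos (hl : 0 < l) (k : ℕ) : 0 < side l k := by
  unfold side; positivity

lemma side_mul_pow (k : ℕ) : side l k * 2 ^ k = l := by
  unfold side; field_simp

lemma side_eq_mul (k' k : ℕ) (h : k' ≤ k) : side l k' = side l k * 2 ^ (k - k') := by
  unfold side
  rw [div_mul_eq_mul_div, div_eq_div_iff (by positivity) (by positivity)]
  rw [mul_comm (l * _), ← mul_assoc, mul_comm ((2:ℝ)^k'), mul_assoc, ← pow_add]
  congr 2
  omega

lemma dy_subset_cube (hl : 0 < l) {k : ℕ} {v : Fin n → ℕ} (hv : ∀ i, v i < 2 ^ k) :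
    dy a l k v ⊆ cube a l := by
  intro x hx i
  have h := hx i
  have hs := side_pos hl k
  simp only [corner, Set.mem_Icc] at h
  have h1 : (0:ℝ) ≤ side l k * v i := by positivity
  have h2 : (v i : ℝ) + 1 ≤ 2 ^ k := by
    have : ((v i + 1 : ℕ) : ℝ) ≤ ((2 ^ k : ℕ) : ℝ) := Nat.cast_le.2 (hv i)
    push_cast at this; linarith
  constructor
  · linarith [h.1]
  · have h3 : side l k * ((v i : ℝ) + 1) ≤ side l k * 2 ^ k := by nlinarith
    rw [side_mul_pow] at h3
    nlinarith [h.2]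

lemma dy_step (hl : 0 < l) (k : ℕ) (v : Fin n → ℕ) :
    dy a l (k + 1) v ⊆ dy a l k (fun i => v i / 2) := by
  intro x hx i
  have h := hx i
  simp only [corner, Set.mem_Icc] at h ⊢
  have hs : side l k = side l (k + 1) * 2 := by
    unfold side; rw [pow_succ]; field_simp
  have hsp := side_pos hl (k + 1)
  set w : ℕ := v i / 2 with hw
  have hw1 : ((2 * w : ℕ) : ℝ) ≤ (v i : ℝ) := Nat.cast_le.2 (by omega)
  have hw2 : ((v i + 1 : ℕ) : ℝ) ≤ ((2 * w + 2 : ℕ) : ℝ) := Nat.cast_le.2 (by omega)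
  push_cast at hw1 hw2
  constructor
  · rw [hs]; nlinarith [h.1]
  · rw [hs]; nlinarith [h.2]

lemma dy_anc (hl : 0 < l) (k' d : ℕ) (v : Fin n → ℕ) :
    dy a l (k' + d) v ⊆ dy a l k' (fun i => v i / 2 ^ d) := by
  induction d generalizing v with
  | zero => simpa using Set.Subset.rfl
  | succ d ih =>
    intro x hx
    have h1 : x ∈ dy a l (k' + d) (fun i => v i / 2) := dy_step hl (k' + d) v hx
    have h2 := ih (fun i => v i / 2) h1
    have h3 : (fun i => v i / 2 / 2 ^ d) = fun i => v i / 2 ^ (d + 1) := by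
      funext i; rw [Nat.div_div_eq_div_mul, pow_succ, mul_comm ((2:ℕ)^d) 2]
    rwa [h3] at h2

lemma mem_dy_idx (hl : 0 < l) {x : EuclideanSpace ℝ (Fin n)} (hx : x ∈ cube a l) (k : ℕ) :
    x ∈ dy a l k (idx a l x k) := by
  intro i
  have hs := side_pos hl k
  have ht : 0 ≤ x i - a i := by linarith [(hx i).1]
  have hfl : (⌊(x i - a i) / side l k⌋₊ : ℝ) ≤ (x i - a i) / side l k :=
    Nat.floor_le (div_nonneg ht hs.le)
  have hfu : (x i - a i) / side l k < ⌊(x i - a i) / side l k⌋₊ + 1 :=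
    Nat.lt_floor_add_one _
  simp only [corner, idx, Set.mem_Icc]
  constructor
  · have := mul_le_mul_of_nonneg_right hfl hs.le
    rw [div_mul_cancel₀ _ hs.ne'] at this
    linarith
  · have := mul_lt_mul_of_pos_right hfu hs
    rw [div_mul_cancel₀ _ hs.ne'] at this
    nlinarith

def grid (a : Fin n → ℝ) (l : ℝ) : Set (EuclideanSpace ℝ (Fin n)) :=
  ⋃ k : ℕ, ⋃ i : Fin n, ⋃ m : ℕ, {x | x i = a i + side l k * m}

lemma idx_lt (hl : 0 < l) {x : EuclideanSpace ℝ (Fin n)} (hx : x ∈ cube a l)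
    (hg : x ∉ grid a l) (k : ℕ) (i : Fin n) : idx a l x k i < 2 ^ k := by
  have hs := side_pos hl k
  have ht : 0 ≤ x i - a i := by linarith [(hx i).1]
  rw [idx, Nat.floor_lt (div_nonneg ht hs.le)]
  have h2 : x i - a i < l := by
    rcases lt_or_eq_of_le (hx i).2 with h | h
    · linarith
    · exfalso; apply hg
      refine Set.mem_iUnion.2 ⟨k, Set.mem_iUnion.2 ⟨i, Set.mem_iUnion.2 ⟨2 ^ k, ?_⟩⟩⟩
      show x i = a i + side l k * (2 ^ k : ℕ)
      push_cast
      rw [side_mul_pow]; exact h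
  rw [div_lt_iff₀ hs]
  push_cast
  rw [mul_comm, side_mul_pow]
  exact h2

lemma mem_dyo_idx (hl : 0 < l) {x : EuclideanSpace ℝ (Fin n)} (hx : x ∈ cube a l)
    (hg : x ∉ grid a l) (k : ℕ) : x ∈ dyo a l k (idx a l x k) := by
  intro i
  have h := mem_dy_idx hl hx k i
  simp only [corner, Set.mem_Icc] at h
  constructor
  · rcases lt_or_eq_of_le h.1 with h' | h'
    · exact h'
    · exfalso; apply hg
      exact Set.mem_iUnion.2 ⟨k, Set.mem_iUnion.2 ⟨i, Set.mem_iUnion.2 ⟨idx a l x k i,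
        h'.symm⟩⟩⟩
  · rcases lt_or_eq_of_le h.2 with h' | h'
    · exact h'
    · exfalso; apply hg
      refine Set.mem_iUnion.2 ⟨k, Set.mem_iUnion.2 ⟨i, Set.mem_iUnion.2 ⟨idx a l x k i + 1, ?_⟩⟩⟩
      show x i = a i + side l k * ((idx a l x k i : ℕ) + 1 : ℕ)
      push_cast
      rw [h']; ring

lemma idx_anc (hl : 0 < l) {x : EuclideanSpace ℝ (Fin n)} (hx : x ∈ cube a l)
    {k' k : ℕ} (h : k' ≤ k) : idx a l x k' = fun i => idx a l x k i / 2 ^ (k - k') := by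
  funext i
  have hs := side_pos hl k
  rw [idx, idx, side_eq_mul k' k h]
  rw [show (x i - a i) / (side l k * 2 ^ (k - k')) = (x i - a i) / side l k / ((2 ^ (k - k') : ℕ) : ℝ) by
    push_cast; rw [div_div]]
  exact Nat.floor_div_natCast _ _

lemma idx_of_mem_dyo (hl : 0 < l) {x : EuclideanSpace ℝ (Fin n)} {k : ℕ} {v : Fin n → ℕ}
    (hx : x ∈ dyo a l k v) : v = idx a l x k := by
  funext i
  have h := hx i
  simp only [corner, Set.mem_Ioo] at h
  have hs := side_pos hl k
  have h1 : (v i : ℝ) ≤ (x i - a i) / side l k := by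
    rw [le_div_iff₀ hs, mul_comm]; linarith [h.1]
  have h2 : (x i - a i) / side l k < (v i : ℝ) + 1 := by
    rw [div_lt_iff₀ hs]; nlinarith [h.2]
  exact ((Nat.floor_eq_iff (le_trans (Nat.cast_nonneg _) h1)).2 ⟨h1, h2⟩).symm


lemma coord_le_norm (x : EuclideanSpace ℝ (Fin n)) (i : Fin n) : |x i| ≤ ‖x‖ := by
  rw [EuclideanSpace.norm_eq]
  rw [show |x i| = Real.sqrt (‖x i‖ ^ 2) by rw [Real.sqrt_sq_eq_abs]; simp]
  apply Real.sqrt_le_sqrt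
  exact Finset.single_le_sum (f := fun j => ‖x j‖ ^ 2) (fun j _ => by positivity)
    (Finset.mem_univ i)

lemma dist_le_of_mem_cube {b : Fin n → ℝ} {m : ℝ} (hm : 0 ≤ m)
    {x y : EuclideanSpace ℝ (Fin n)} (hx : x ∈ cube b m) (hy : y ∈ cube b m) :
    dist x y ≤ m * Real.sqrt n := by
  rw [EuclideanSpace.dist_eq]
  have h1 : ∀ i, dist (x i) (y i) ^ 2 ≤ m ^ 2 := by
    intro i
    have h2 : |x i - y i| ≤ m := by
      rw [abs_sub_le_iff]
      constructor <;> [skip; skip] <;>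
        · have := (hx i); have := (hy i)
          simp only [Set.mem_Icc] at *
          linarith [(hx i).1, (hx i).2, (hy i).1, (hy i).2]
    have hd : dist (x i) (y i) = |x i - y i| := Real.dist_eq _ _
    rw [hd]
    nlinarith [h2, abs_nonneg (x i - y i)]
  calc Real.sqrt (∑ i, dist (x i) (y i) ^ 2) ≤ Real.sqrt (∑ _i : Fin n, m ^ 2) :=
        Real.sqrt_le_sqrt (Finset.sum_le_sum fun i _ => h1 i)
  _ = m * Real.sqrt n := by
      rw [Finset.sum_const, Finset.card_univ, Fintype.card_fin, nsmul_eq_mul]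
      rw [Real.sqrt_mul (by positivity), Real.sqrt_sq hm]; ring

lemma cube_subset_closedBall {b : Fin n → ℝ} {m : ℝ} (hm : 0 ≤ m)
    {x : EuclideanSpace ℝ (Fin n)} (hx : x ∈ cube b m) :
    cube b m ⊆ closedBall x (m * Real.sqrt n) :=
  fun y hy => mem_closedBall.2 (by rw [dist_comm] at *; exact dist_le_of_mem_cube hm hx hy)

lemma closedBall_subset_cube {x : EuclideanSpace ℝ (Fin n)} {R : ℝ} :
    closedBall x R ⊆ cube (fun i => x i - R) (2 * R) := by
  intro y hy i
  have h1 : |y i - x i| ≤ R := by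
    have h2 := coord_le_norm (y - x) i
    have h3 : (y - x) i = y i - x i := rfl
    rw [h3] at h2
    have h4 : ‖y - x‖ = dist y x := (dist_eq_norm _ _).symm
    rw [h4] at h2
    exact h2.trans (mem_closedBall.1 hy)
  rw [abs_le] at h1
  show y i ∈ Set.Icc (x i - R) (x i - R + 2 * R)
  rw [Set.mem_Icc]
  constructor
  · linarith [h1.1]
  · linarith [h1.2]

lemma volume_closedBall_le (x : EuclideanSpace ℝ (Fin n)) {R : ℝ} :
    volume (closedBall x R) ≤ ENNReal.ofReal (2 * R) ^ n := by
  rcases le_or_gt 0 R with hR | hR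
  · calc volume (closedBall x R) ≤ volume (cube (fun i => x i - R) (2 * R)) :=
        measure_mono closedBall_subset_cube
    _ = ENNReal.ofReal (2 * R) ^ n := volume_cube _ (by linarith)
  · rw [closedBall_eq_empty.2 hR]; simp

lemma cube_subset_closedBall' {x : EuclideanSpace ℝ (Fin n)} {r : ℝ} (hr : 0 < r) (hn : 0 < n) :
    cube (fun i => x i - r / (2 * Real.sqrt n)) (r / Real.sqrt n) ⊆ closedBall x r := by
  have hsn : 0 < Real.sqrt n := Real.sqrt_pos.2 (by exact_mod_cast hn)
  intro y hy
  have hx : x ∈ cube (fun i => x i - r / (2 * Real.sqrt n)) (r / Real.sqrt n) := by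
    intro i
    show x i ∈ Set.Icc (x i - r / (2 * Real.sqrt n)) (x i - r / (2 * Real.sqrt n) + r / Real.sqrt n)
    rw [Set.mem_Icc]
    constructor
    · have : 0 < r / (2 * Real.sqrt n) := by positivity
      linarith
    · have h1 : r / (2 * Real.sqrt n) ≤ r / Real.sqrt n := by
        apply div_le_div_of_nonneg_left hr.le hsn
        linarith
      linarith
  have hd := dist_le_of_mem_cube (by positivity) hy hx
  rw [mem_closedBall]
  calc dist y x ≤ r / Real.sqrt n * Real.sqrt n := hd
  _ = r := by field_simp


noncomputable def Ccz (n : ℕ) : NNReal := Real.toNNReal ((6 * Real.sqrt n) ^ n)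

lemma coe_Ccz (hn : 0 < n) : (Ccz n : ℝ≥0∞) = ENNReal.ofReal ((6 * Real.sqrt n) ^ n) := rfl

lemma hCcz (hn : 0 < n) : ∀ x : EuclideanSpace ℝ (Fin n),
    ∃ᶠ r in nhdsWithin 0 (Set.Ioi 0),
      volume (closedBall x (3 * r)) ≤ (Ccz n : ℝ≥0∞) * volume (closedBall x r) := by
  intro x
  have hsn : 0 < Real.sqrt n := Real.sqrt_pos.2 (by exact_mod_cast hn)
  refine Filter.Eventually.frequently ?_
  filter_upwards [self_mem_nhdsWithin] with r (hr : r ∈ Set.Ioi 0)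
  have hr0 : 0 < r := hr
  have h1 : volume (closedBall x (3 * r)) ≤ ENNReal.ofReal (2 * (3 * r)) ^ n :=
    volume_closedBall_le x
  have h2 : ENNReal.ofReal (r / Real.sqrt n) ^ n ≤ volume (closedBall x r) := by
    rw [← volume_cube (fun i => x i - r / (2 * Real.sqrt n)) (by positivity)]
    exact measure_mono (cube_subset_closedBall' hr0 hn)
  calc volume (closedBall x (3 * r)) ≤ ENNReal.ofReal (2 * (3 * r)) ^ n := h1
  _ = ENNReal.ofReal ((6 * Real.sqrt n) * (r / Real.sqrt n)) ^ n := by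
      congr 2; field_simp; ring
  _ = ENNReal.ofReal (6 * Real.sqrt n) ^ n * ENNReal.ofReal (r / Real.sqrt n) ^ n := by
      rw [ENNReal.ofReal_mul (by positivity), mul_pow]
  _ = (Ccz n : ℝ≥0∞) * ENNReal.ofReal (r / Real.sqrt n) ^ n := by
      rw [coe_Ccz hn, ENNReal.ofReal_pow (by positivity)]
  _ ≤ (Ccz n : ℝ≥0∞) * volume (closedBall x r) := by
      exact mul_le_mul_right h2 _

noncomputable def vf (n : ℕ) (hn : 0 < n) : VitaliFamily (volume : Measure (EuclideanSpace ℝ (Fin n))) :=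
  Vitali.vitaliFamily volume (Ccz n) (hCcz hn)

lemma ocube_nonempty {b : Fin n → ℝ} {m : ℝ} (hm : 0 < m) : (ocube b m).Nonempty := by
  refine ⟨WithLp.toLp 2 (fun i => b i + m / 2), fun i => ?_⟩
  constructor <;> simp only [] <;> linarith

lemma dy_mem_setsAt (hn : 0 < n) (hl : 0 < l) {k : ℕ} {v : Fin n → ℕ}
    {x : EuclideanSpace ℝ (Fin n)} (hx : x ∈ dy a l k v) :
    dy a l k v ∈ (vf n hn).setsAt x := by
  have hs := side_pos hl k
  have hsn : 0 < Real.sqrt n := Real.sqrt_pos.2 (by exact_mod_cast hn)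
  refine ⟨isClosed_cube _ _, ?_, side l k * Real.sqrt n, ?_, ?_⟩
  · exact (ocube_nonempty hs).mono
      (interior_maximal (ocube_subset _ _) (isOpen_ocube _ _))
  · exact cube_subset_closedBall hs.le hx
  · calc volume (closedBall x (3 * (side l k * Real.sqrt n)))
        ≤ ENNReal.ofReal (2 * (3 * (side l k * Real.sqrt n))) ^ n := volume_closedBall_le x
    _ = ENNReal.ofReal ((6 * Real.sqrt n) * side l k) ^ n := by congr 2; ring
    _ = ENNReal.ofReal (6 * Real.sqrt n) ^ n * ENNReal.ofReal (side l k) ^ n := by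
        rw [ENNReal.ofReal_mul (by positivity), mul_pow]
    _ = (Ccz n : ℝ≥0∞) * volume (dy a l k v) := by
        rw [coe_Ccz hn, ENNReal.ofReal_pow (by positivity)]
        congr 1
        exact (volume_cube _ hs.le).symm

lemma tendsto_dy_filterAt (hn : 0 < n) (hl : 0 < l) {x : EuclideanSpace ℝ (Fin n)}
    (hx : x ∈ cube a l) :
    Filter.Tendsto (fun k => dy a l k (idx a l x k)) Filter.atTop ((vf n hn).filterAt x) := by
  rw [VitaliFamily.tendsto_filterAt_iff]
  have hsn : 0 < Real.sqrt n := Real.sqrt_pos.2 (by exact_mod_cast hn)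
  constructor
  · exact Filter.Eventually.of_forall fun k => dy_mem_setsAt hn hl (mem_dy_idx hl hx k)
  · intro ε hε
    have h1 : Filter.Tendsto (fun k : ℕ => side l k * Real.sqrt n) Filter.atTop (nhds 0) := by
      have : (fun k : ℕ => side l k * Real.sqrt n)
          = fun k : ℕ => (l * Real.sqrt n) * (1 / 2) ^ k := by
        funext k; unfold side; field_simp; rw [← mul_pow]; norm_num
      rw [this]
      simpa using (tendsto_pow_atTop_nhds_zero_of_lt_one (by norm_num : (0:ℝ) ≤ 1/2)
        (by norm_num : (1:ℝ)/2 < 1)).const_mul (l * Real.sqrt n)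
    filter_upwards [h1.eventually_le_const hε] with k hk
    exact (cube_subset_closedBall (side_pos hl k).le (mem_dy_idx hl hx k)).trans
      (closedBall_subset_closedBall hk)

variable {f : EuclideanSpace ℝ (Fin n) → ℝ} {M : ℝ}

noncomputable def dyAvg (f : EuclideanSpace ℝ (Fin n) → ℝ) (a : Fin n → ℝ) (l : ℝ)
    (k : ℕ) (v : Fin n → ℕ) : ℝ := ⨍ x in dy a l k v, |f x|

def Sel (f : EuclideanSpace ℝ (Fin n) → ℝ) (a : Fin n → ℝ) (l : ℝ) (M : ℝ)
    (k : ℕ) (v : Fin n → ℕ) : Prop :=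
  (∀ i, v i < 2 ^ k) ∧ M < dyAvg f a l k v ∧
    ∀ k' < k, dyAvg f a l k' (fun i => v i / 2 ^ (k - k')) ≤ M

lemma grid_null (a : Fin n → ℝ) (l : ℝ) : volume (grid a l) = 0 := by
  refine measure_iUnion_null fun k => measure_iUnion_null fun i => measure_iUnion_null fun m => ?_
  exact volume_hyperplane i _

lemma measurableSet_cube (b : Fin n → ℝ) (m : ℝ) : MeasurableSet (cube b m) :=
  (isClosed_cube b m).measurableSet

lemma integrableOn_abs_dy (hl : 0 < l) (hf : IntegrableOn f (cube a l) volume)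
    {k : ℕ} {v : Fin n → ℕ} (hv : ∀ i, v i < 2 ^ k) :
    IntegrableOn (fun x => |f x|) (dy a l k v) volume := by
  have h1 : IntegrableOn (fun x => |f x|) (cube a l) volume := hf.abs
  exact h1.mono_set (dy_subset_cube hl hv)

lemma toReal_volume_cube (b : Fin n → ℝ) {m : ℝ} (hm : 0 ≤ m) :
    (volume (cube b m)).toReal = m ^ n := by
  rw [volume_cube b hm, ← ENNReal.ofReal_pow hm, ENNReal.toReal_ofReal (by positivity)]

lemma avg_ocube_eq (b : Fin n → ℝ) (m : ℝ) (g : EuclideanSpace ℝ (Fin n) → ℝ) :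
    (⨍ x in ocube b m, g x) = ⨍ x in cube b m, g x := by
  show average (volume.restrict (ocube b m)) g = average (volume.restrict (cube b m)) g
  rw [restrict_cube_eq]

lemma dyAvg_nonneg (k : ℕ) (v : Fin n → ℕ) : 0 ≤ dyAvg f a l k v := by
  unfold dyAvg
  rw [setAverage_eq]
  have : 0 ≤ ∫ x in dy a l k v, |f x| := setIntegral_nonneg (measurableSet_cube _ _)
    (fun x _ => abs_nonneg _)
  positivity

lemma child_parent (hl : 0 < l) (hf : IntegrableOn f (cube a l) volume)
    {k : ℕ} {v : Fin n → ℕ} (hv : ∀ i, v i < 2 ^ (k + 1)) :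
    dyAvg f a l (k + 1) v ≤ 2 ^ n * dyAvg f a l k (fun i => v i / 2) := by
  have hvp : ∀ i, v i / 2 < 2 ^ k := fun i => by
    have h1 := hv i
    have h2 : (2:ℕ) ^ (k + 1) = 2 ^ k * 2 := pow_succ 2 k
    omega
  have hs := side_pos hl k
  have hs' := side_pos hl (k + 1)
  have hss : side l k = side l (k + 1) * 2 := by
    unfold side; rw [pow_succ]; field_simp
  have hintp : IntegrableOn (fun x => |f x|) (dy a l k fun i => v i / 2) volume :=
    integrableOn_abs_dy hl hf hvp
  have hmono : ∫ x in dy a l (k + 1) v, |f x| ≤ ∫ x in dy a l k (fun i => v i / 2), |f x| :=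
    setIntegral_mono_set hintp
      (Filter.Eventually.of_forall fun x => abs_nonneg _)
      (Filter.Eventually.of_forall (fun x hx => dy_step hl k v hx))
  have hip : 0 ≤ ∫ x in dy a l k (fun i => v i / 2), |f x| :=
    setIntegral_nonneg (measurableSet_cube _ _) (fun x _ => abs_nonneg _)
  unfold dyAvg dy
  rw [setAverage_eq, setAverage_eq, measureReal_def, measureReal_def, toReal_volume_cube _ hs.le, toReal_volume_cube _ hs'.le,
    smul_eq_mul, smul_eq_mul]
  have key : (side l (k+1) ^ n)⁻¹ * ∫ x in dy a l k (fun i => v i / 2), |f x|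
      = 2 ^ n * ((side l k ^ n)⁻¹ * ∫ x in dy a l k (fun i => v i / 2), |f x|) := by
    rw [hss]
    have h2 : side l (k + 1) ≠ 0 := hs'.ne'
    field_simp
    ring
  calc (side l (k+1) ^ n)⁻¹ * ∫ x in dy a l (k+1) v, |f x|
      ≤ (side l (k+1) ^ n)⁻¹ * ∫ x in dy a l k (fun i => v i / 2), |f x| := by
        apply mul_le_mul_of_nonneg_left hmono (by positivity)
  _ = 2 ^ n * ((side l k ^ n)⁻¹ * ∫ x in dy a l k (fun i => v i / 2), |f x|) := key

lemma dy_zero (hl : 0 < l) : dy a l 0 (fun _ => (0:ℕ)) = cube a l := by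
  unfold dy corner side
  congr 1
  funext i
  simp
  simp

lemma sel_pos (hl : 0 < l) (hM : (⨍ x in cube a l, |f x|) ≤ M) {k : ℕ} {v : Fin n → ℕ}
    (hsel : Sel f a l M k v) : 0 < k := by
  rcases Nat.eq_zero_or_pos k with hk | hk
  · exfalso
    subst hk
    have hv : v = fun _ => 0 := funext fun i => by have := hsel.1 i; omega
    have := hsel.2.1
    rw [hv] at this
    unfold dyAvg at this
    rw [dy_zero hl] at this
    linarith
  · exact hk

lemma sel_bounds (hl : 0 < l) (hf : IntegrableOn f (cube a l) volume)
    (hM : (⨍ x in cube a l, |f x|) ≤ M) {k : ℕ} {v : Fin n → ℕ}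
    (hsel : Sel f a l M k v) :
    M < dyAvg f a l k v ∧ dyAvg f a l k v ≤ 2 ^ n * M := by
  refine ⟨hsel.2.1, ?_⟩
  obtain ⟨k', rfl⟩ : ∃ k', k = k' + 1 := ⟨k - 1, by have := sel_pos hl hM hsel; omega⟩
  have hpar := hsel.2.2 k' (by omega)
  have heq : (fun i => v i / 2 ^ (k' + 1 - k')) = fun i => v i / 2 := by
    funext i; norm_num
  rw [heq] at hpar
  calc dyAvg f a l (k' + 1) v ≤ 2 ^ n * dyAvg f a l k' (fun i => v i / 2) :=
        child_parent hl hf hsel.1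
  _ ≤ 2 ^ n * M := by
      apply mul_le_mul_of_nonneg_left hpar (by positivity)

lemma mem_cube_of_mem_dyo (hl : 0 < l) {k : ℕ} {v : Fin n → ℕ} (hv : ∀ i, v i < 2 ^ k)
    {x : EuclideanSpace ℝ (Fin n)} (hx : x ∈ dyo a l k v) : x ∈ cube a l :=
  dy_subset_cube hl hv (ocube_subset _ _ hx)

lemma sel_disjoint_aux (hl : 0 < l) {k k' : ℕ} {v v' : Fin n → ℕ}
    (h1 : Sel f a l M k v) (h2 : Sel f a l M k' v') (hkk : k < k') :
    Disjoint (dyo a l k v) (dyo a l k' v') := by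
  rw [Set.disjoint_left]
  intro x hx1 hx2
  have hxc : x ∈ cube a l := mem_cube_of_mem_dyo hl h2.1 hx2
  have hv : v = idx a l x k := idx_of_mem_dyo hl hx1
  have hv' : v' = idx a l x k' := idx_of_mem_dyo hl hx2
  have hanc := idx_anc hl hxc hkk.le
  have hle := h2.2.2 k hkk
  have : (fun i => v' i / 2 ^ (k' - k)) = v := by
    rw [hv', hv, hanc]
  rw [this] at hle
  exact absurd h1.2.1 (not_lt.2 hle)

lemma sel_disjoint (hl : 0 < l) {k k' : ℕ} {v v' : Fin n → ℕ}
    (h1 : Sel f a l M k v) (h2 : Sel f a l M k' v') (hne : (k, v) ≠ (k', v')) :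
    Disjoint (dyo a l k v) (dyo a l k' v') := by
  rcases lt_trichotomy k k' with h | h | h
  · exact sel_disjoint_aux hl h1 h2 h
  · subst h
    rw [Set.disjoint_left]
    intro x hx1 hx2
    have hv : v = idx a l x k := idx_of_mem_dyo hl hx1
    have hv' : v' = idx a l x k := idx_of_mem_dyo hl hx2
    exact hne (by rw [Prod.mk.injEq]; exact ⟨rfl, hv.trans hv'.symm⟩)
  · exact (sel_disjoint_aux hl h2 h1 h).symm

lemma exists_sel_of_bad (hl : 0 < l) {x : EuclideanSpace ℝ (Fin n)}
    (hxc : x ∈ cube a l) (hxg : x ∉ grid a l)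
    (hbad : ¬∀ k, dyAvg f a l k (idx a l x k) ≤ M) :
    ∃ k, Sel f a l M k (idx a l x k) ∧ x ∈ dyo a l k (idx a l x k) := by
  push_neg at hbad
  have hex : ∃ k, M < dyAvg f a l k (idx a l x k) := hbad
  classical
  let k := Nat.find hex
  refine ⟨k, ⟨fun i => idx_lt hl hxc hxg k i, Nat.find_spec hex, ?_⟩, mem_dyo_idx hl hxc hxg k⟩
  intro k' hk'
  have hmin := Nat.find_min hex hk'
  push_neg at hmin
  have : idx a l x k' = fun i => idx a l x k i / 2 ^ (k - k') := idx_anc hl hxc hk'.le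
  rw [← this]
  exact hmin

lemma ae_tendsto_dyAvg (hn : 0 < n) (hl : 0 < l)
    (hf : IntegrableOn f (cube a l) volume) :
    ∀ᵐ x ∂(volume : Measure (EuclideanSpace ℝ (Fin n))),
      (x ∈ cube a l ∧ x ∉ grid a l) →
        Filter.Tendsto (fun k => dyAvg f a l k (idx a l x k)) Filter.atTop (nhds |f x|) := by
  set g : EuclideanSpace ℝ (Fin n) → ℝ := (cube a l).indicator fun y => |f y| with hg
  have hgint : Integrable g volume := by
    have h1 : IntegrableOn (fun x => |f x|) (cube a l) volume := hf.abs
    exact h1.integrable_indicator (measurableSet_cube a l)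
  filter_upwards [(vf n hn).ae_tendsto_average hgint.locallyIntegrable] with x hx hmem
  obtain ⟨hxc, hxg⟩ := hmem
  have htd := hx.comp (tendsto_dy_filterAt hn hl hxc)
  have heq : ∀ k, (⨍ y in dy a l k (idx a l x k), g y) = dyAvg f a l k (idx a l x k) := by
    intro k
    unfold dyAvg
    rw [setAverage_eq, setAverage_eq]
    congr 1
    refine setIntegral_congr_fun (measurableSet_cube _ _) fun y hy => ?_
    exact Set.indicator_of_mem (dy_subset_cube hl (fun i => idx_lt hl hxc hxg k i) hy) _
  have hgx : g x = |f x| := Set.indicator_of_mem hxc _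
  rw [← hgx]
  exact htd.congr heq

end CZ

/-- **Calderón–Zygmund decomposition.** -/
theorem calderon_zygmund_decomposition (n : ℕ) (hn : 0 < n)
    (a : Fin n → ℝ) (l : ℝ) (hl : 0 < l)
    (f : EuclideanSpace ℝ (Fin n) → ℝ) (hf : IntegrableOn f (cube a l) volume)
    (M : ℝ) (hM : (⨍ x in cube a l, |f x|) ≤ M) :
    ∃ (Q : ℕ → Set (EuclideanSpace ℝ (Fin n))) (J : Set ℕ),
      (∀ j ∈ J, ∃ (b : Fin n → ℝ) (m : ℝ), 0 < m ∧
        Q j = {x | ∀ i, x i ∈ Set.Ioo (b i) (b i + m)} ∧ Q j ⊆ cube a l) ∧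
      (J.Pairwise fun i j => Disjoint (Q i) (Q j)) ∧
      (∀ᵐ x ∂volume.restrict (cube a l \ ⋃ j ∈ J, Q j), |f x| ≤ M) ∧
      (∀ j ∈ J, M < (⨍ x in Q j, |f x|) ∧ (⨍ x in Q j, |f x|) ≤ 2 ^ n * M) ∧
      ∑' j : J, volume (Q j) ≤ ENNReal.ofReal ((1 / M) * ∫ x in cube a l, |f x|) := by
  classical
  have habs : IntegrableOn (fun x => |f x|) (cube a l) volume := hf.abs
  have hvolt : (volume (cube a l)).toReal = l ^ n := CZ.toReal_volume_cube a hl.le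
  have hInt : (0:ℝ) ≤ ∫ x in cube a l, |f x| :=
    setIntegral_nonneg (CZ.measurableSet_cube a l) fun x _ => abs_nonneg _
  have havg0 : (0:ℝ) ≤ ⨍ x in cube a l, |f x| := by
    rw [setAverage_eq]; rw [smul_eq_mul]; positivity
  have hM0 : 0 ≤ M := le_trans havg0 hM
  rcases eq_or_lt_of_le hM0 with hM0' | hMpos
  · -- degenerate case M = 0
    refine ⟨fun _ => ∅, ∅, by simp, by simp, ?_, by simp, by simp⟩
    have hint0 : ∫ x in cube a l, |f x| = 0 := by
      have h1 : (⨍ x in cube a l, |f x|) ≤ 0 := hM.trans_eq hM0'.symm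
      rw [setAverage_eq, measureReal_def, hvolt, smul_eq_mul] at h1
      have hpow : (0:ℝ) < (l ^ n)⁻¹ := by positivity
      nlinarith
    have hae := (integral_eq_zero_iff_of_nonneg (fun x => abs_nonneg (f x)) habs).1 hint0
    have : (cube a l \ ⋃ j ∈ (∅ : Set ℕ), (∅ : Set (EuclideanSpace ℝ (Fin n)))) = cube a l := by
      simp
    rw [this]
    filter_upwards [hae] with x hx
    rw [Pi.zero_apply] at hx
    rw [hx, ← hM0']
  · -- main case : 0 < M
    set S : Set (ℕ × (Fin n → ℕ)) := {p | CZ.Sel f a l M p.1 p.2} with hS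
    obtain ⟨e, he⟩ := exists_injective_nat (ℕ × (Fin n → ℕ))
    set d := Function.invFun e with hdd
    have hd : ∀ p, d (e p) = p := Function.leftInverse_invFun he
    set Qs : ℕ → Set (EuclideanSpace ℝ (Fin n)) :=
      fun j => CZ.dyo a l (d j).1 (d j).2 with hQs
    set J : Set ℕ := e '' S with hJ
    have hdS : ∀ j ∈ J, CZ.Sel f a l M (d j).1 (d j).2 := by
      rintro j ⟨p, hp, rfl⟩
      rw [hd]; exact hp
    have hQsub : ∀ j ∈ J, Qs j ⊆ cube a l := fun j hj =>
      (CZ.ocube_subset _ _).trans (CZ.dy_subset_cube hl (hdS j hj).1)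
    have hpairwise : J.Pairwise fun i j => Disjoint (Qs i) (Qs j) := by
      rintro i ⟨p, hp, rfl⟩ j ⟨q, hq, rfl⟩ hij
      have hpq : p ≠ q := fun h => hij (by rw [h])
      show Disjoint (Qs (e p)) (Qs (e q))
      simp only [hQs, hd]
      exact CZ.sel_disjoint hl hp hq (by simpa using hpq)
    have havgQ : ∀ j ∈ J, (⨍ x in Qs j, |f x|) = CZ.dyAvg f a l (d j).1 (d j).2 :=
      fun j hj => CZ.avg_ocube_eq _ _ _
    refine ⟨Qs, J, ?_, hpairwise, ?_, ?_, ?_⟩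
    · intro j hj
      exact ⟨CZ.corner a l (d j).1 (d j).2, CZ.side l (d j).1, CZ.side_pos hl _, rfl,
        hQsub j hj⟩
    · -- almost everywhere bound
      have hmeas : MeasurableSet (cube a l \ ⋃ j ∈ J, Qs j) :=
        (CZ.measurableSet_cube a l).diff (MeasurableSet.biUnion (Set.to_countable J)
          fun j _ => (CZ.isOpen_ocube _ _).measurableSet)
      filter_upwards [ae_restrict_of_ae (measure_eq_zero_iff_ae_notMem.mp (CZ.grid_null a l)),
        ae_restrict_of_ae (CZ.ae_tendsto_dyAvg hn hl hf),
        ae_restrict_mem hmeas] with x hxg htd hx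
      rcases Classical.em (∀ k, CZ.dyAvg f a l k (CZ.idx a l x k) ≤ M) with hall | hbad
      · exact le_of_tendsto (htd ⟨hx.1, hxg⟩) (Filter.Eventually.of_forall hall)
      · exfalso
        obtain ⟨k, hsel, hxin⟩ := CZ.exists_sel_of_bad hl hx.1 hxg hbad
        apply hx.2
        refine Set.mem_biUnion (show e (k, CZ.idx a l x k) ∈ J from
          ⟨(k, CZ.idx a l x k), hsel, rfl⟩) ?_
        show x ∈ Qs (e (k, CZ.idx a l x k))
        simp only [hQs, hd]
        exact hxin
    · -- average bounds
      intro j hj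
      rw [havgQ j hj]
      exact CZ.sel_bounds hl hf hM (hdS j hj)
    · -- sum bound
      set I : ℝ := ∫ x in cube a l, |f x| with hI
      have hperc : ∀ j : J, ENNReal.ofReal M * volume (Qs (j : ℕ))
          ≤ ∫⁻ x in Qs (j : ℕ), ENNReal.ofReal |f x| := by
        rintro ⟨j, hj⟩
        have hp := hdS j hj
        have hs := CZ.side_pos hl (d j).1
        have hvol : volume (Qs j) = ENNReal.ofReal (CZ.side l (d j).1 ^ n) := by
          show volume (CZ.ocube _ _) = _
          rw [CZ.volume_ocube _ hs.le, ← ENNReal.ofReal_pow hs.le]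
        have h1 : M < CZ.dyAvg f a l (d j).1 (d j).2 := hp.2.1
        have h2 : CZ.dyAvg f a l (d j).1 (d j).2
            = (CZ.side l (d j).1 ^ n)⁻¹ * ∫ x in CZ.dy a l (d j).1 (d j).2, |f x| := by
          unfold CZ.dyAvg CZ.dy
          rw [setAverage_eq, measureReal_def, CZ.toReal_volume_cube _ hs.le, smul_eq_mul]
        have hpow : (0:ℝ) < CZ.side l (d j).1 ^ n := by positivity
        have h3 : M * CZ.side l (d j).1 ^ n < ∫ x in CZ.dy a l (d j).1 (d j).2, |f x| := by
          rw [h2, ← div_eq_inv_mul] at h1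
          exact (lt_div_iff₀ hpow).mp h1
        have h4 : ∫ x in CZ.dy a l (d j).1 (d j).2, |f x| = ∫ x in Qs j, |f x| := by
          show ∫ x, |f x| ∂(volume.restrict (cube _ _)) = ∫ x, |f x| ∂(volume.restrict (CZ.ocube _ _))
          rw [CZ.restrict_cube_eq]
        have hio : IntegrableOn (fun x => |f x|) (Qs j) volume :=
          (CZ.integrableOn_abs_dy hl hf hp.1).mono_set (CZ.ocube_subset _ _)
        have h5 : ENNReal.ofReal (∫ x in Qs j, |f x|)
            = ∫⁻ x in Qs j, ENNReal.ofReal |f x| :=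
          ofReal_integral_eq_lintegral_ofReal hio
            (Filter.Eventually.of_forall fun x => abs_nonneg _)
        calc ENNReal.ofReal M * volume (Qs j)
            = ENNReal.ofReal (M * CZ.side l (d j).1 ^ n) := by
              rw [hvol, ENNReal.ofReal_mul hM0]
        _ ≤ ENNReal.ofReal (∫ x in Qs j, |f x|) := by
              rw [← h4]; exact ENNReal.ofReal_le_ofReal h3.le
        _ = ∫⁻ x in Qs j, ENNReal.ofReal |f x| := h5
      have hpair' : Pairwise (Function.onFun Disjoint fun j : J => Qs (j : ℕ)) := by
        rintro ⟨i, hi⟩ ⟨j, hj⟩ hij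
        exact hpairwise hi hj (fun hc => hij (Subtype.ext hc))
      have hmeasQ : ∀ j : J, MeasurableSet (Qs (j : ℕ)) :=
        fun j => (CZ.isOpen_ocube _ _).measurableSet
      have hU : ∫⁻ x in ⋃ j : J, Qs (j : ℕ), ENNReal.ofReal |f x|
          = ∑' j : J, ∫⁻ x in Qs (j : ℕ), ENNReal.ofReal |f x| :=
        lintegral_iUnion hmeasQ hpair' _
      have hUsub : (⋃ j : J, Qs (j : ℕ)) ⊆ cube a l :=
        Set.iUnion_subset fun j => hQsub j j.2
      have htop : ∫⁻ x in cube a l, ENNReal.ofReal |f x| = ENNReal.ofReal I :=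
        (ofReal_integral_eq_lintegral_ofReal habs
          (Filter.Eventually.of_forall fun x => abs_nonneg _)).symm
      have hmain : ENNReal.ofReal M * (∑' j : J, volume (Qs (j : ℕ))) ≤ ENNReal.ofReal I := by
        rw [← ENNReal.tsum_mul_left]
        calc ∑' j : J, ENNReal.ofReal M * volume (Qs (j : ℕ))
            ≤ ∑' j : J, ∫⁻ x in Qs (j : ℕ), ENNReal.ofReal |f x| :=
              ENNReal.tsum_le_tsum hperc
        _ = ∫⁻ x in ⋃ j : J, Qs (j : ℕ), ENNReal.ofReal |f x| := hU.symm
        _ ≤ ∫⁻ x in cube a l, ENNReal.ofReal |f x| := lintegral_mono_set hUsub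
        _ = ENNReal.ofReal I := htop
      have h0 : ENNReal.ofReal M ≠ 0 := by
        simp only [ne_eq, ENNReal.ofReal_eq_zero, not_le]; exact hMpos
      have hnetop : ENNReal.ofReal M ≠ ⊤ := ENNReal.ofReal_ne_top
      calc ∑' j : J, volume (Qs (j : ℕ))
          ≤ ENNReal.ofReal I / ENNReal.ofReal M :=
            (ENNReal.le_div_iff_mul_le (Or.inl h0) (Or.inl hnetop)).2
              (by rwa [mul_comm] at hmain)
      _ = ENNReal.ofReal (I / M) := (ENNReal.ofReal_div_of_pos hMpos).symm
      _ = ENNReal.ofReal (1 / M * I) := by rw [one_div_mul_eq_div]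
end

section
/- (John–Nirenberg inequality.) There exist constants c > 0 and C > 0 depending only on n such that if f ∈ BMO(ℝ^n) with ‖f‖_{BMO} > 0, then for every cube Q ⊂ ℝ^n and every α ≥ ‖f‖_{BMO}, |{x ∈ Q : |f(x) − f_Q| > α}| ≤ (C/‖f‖_{BMO}) e^{−cα/‖f‖_{BMO}} ∫_Q |f − f_Q| dx. -/
open MeasureTheory ENNReal Metric SchwartzMap
open scoped FourierTransform SchwartzMap

open Set

namespace JN
variable {n : ℕ}

lemma cube_eq_preimage (a : Fin n → ℝ) (l : ℝ) :
    cube a l = (MeasurableEquiv.toLp 2 (Fin n → ℝ)).symm ⁻¹'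
      (Set.univ.pi fun i => Icc (a i) (a i + l)) := by
  ext x
  simp only [cube, mem_setOf_eq, mem_preimage, Set.mem_pi, mem_univ, true_implies]
  exact Iff.rfl

lemma measurableSet_cube (a : Fin n → ℝ) (l : ℝ) : MeasurableSet (cube a l) := by
  rw [cube_eq_preimage]
  exact (MeasurableEquiv.toLp 2 (Fin n → ℝ)).symm.measurable
    (MeasurableSet.univ_pi fun i => measurableSet_Icc)

lemma volume_cube (a : Fin n → ℝ) (l : ℝ) :
    volume (cube a l) = ENNReal.ofReal l ^ n := by
  rw [cube_eq_preimage,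
    (EuclideanSpace.volume_preserving_symm_measurableEquiv_toLp (Fin n)).measure_preimage
      (MeasurableSet.univ_pi fun i => measurableSet_Icc).nullMeasurableSet,
    volume_pi_pi]
  simp [Real.volume_Icc]

lemma volume_hyperplane (i : Fin n) (c : ℝ) :
    volume {x : EuclideanSpace ℝ (Fin n) | x i = c} = 0 := by
  have h0 : (volume : Measure (Fin n → ℝ)) {y | y i = c} = 0 := by
    rw [show (volume : Measure (Fin n → ℝ)) = Measure.pi fun _ => (volume : Measure ℝ) from volume_pi]
    exact Measure.pi_hyperplane (fun _ => (volume : Measure ℝ)) i c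
  have : {x : EuclideanSpace ℝ (Fin n) | x i = c} =
      (MeasurableEquiv.toLp 2 (Fin n → ℝ)).symm ⁻¹' {y : Fin n → ℝ | y i = c} := rfl
  rw [this, (EuclideanSpace.volume_preserving_symm_measurableEquiv_toLp (Fin n)).measure_preimage]
  · exact h0
  · have : MeasurableSet {y : Fin n → ℝ | y i = c} :=
      measurableSet_eq_fun (measurable_pi_apply i) measurable_const
    exact this.nullMeasurableSet

lemma isClosed_cube (a : Fin n → ℝ) (l : ℝ) : IsClosed (cube a l) := by
  have : cube a l = ⋂ i, (fun x : EuclideanSpace ℝ (Fin n) => x i) ⁻¹' Icc (a i) (a i + l) := by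
    ext x; simp [cube]
  rw [this]
  exact isClosed_iInter fun i =>
    IsClosed.preimage (EuclideanSpace.proj (𝕜 := ℝ) i).continuous isClosed_Icc

lemma cube_subset_closedBall {a : Fin n → ℝ} {l : ℝ} (hl : 0 ≤ l)
    {x : EuclideanSpace ℝ (Fin n)} (hx : x ∈ cube a l) :
    cube a l ⊆ closedBall x (l * Real.sqrt n) := by
  intro y hy
  rw [mem_closedBall, EuclideanSpace.dist_eq]
  have hb : ∀ i, dist (y i) (x i) ^ 2 ≤ l ^ 2 := by
    intro i
    have h1 := hx i; have h2 := hy i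
    rw [Real.dist_eq, sq_abs]
    simp only [mem_Icc] at h1 h2
    exact sq_le_sq' (by linarith [h1.1, h1.2, h2.1, h2.2]) (by linarith [h1.1, h1.2, h2.1, h2.2])
  calc Real.sqrt (∑ i, dist (y i) (x i) ^ 2) ≤ Real.sqrt (∑ _i : Fin n, l ^ 2) :=
        Real.sqrt_le_sqrt (Finset.sum_le_sum fun i _ => hb i)
    _ = l * Real.sqrt n := by
        rw [Finset.sum_const, Finset.card_univ, Fintype.card_fin, nsmul_eq_mul,
          Real.sqrt_mul (by positivity), Real.sqrt_sq hl, mul_comm]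

lemma corner_mem_cube {a : Fin n → ℝ} {l : ℝ} (hl : 0 ≤ l) :
    (WithLp.equiv 2 (Fin n → ℝ)).symm a ∈ cube a l := by
  intro i
  simp only [mem_Icc]
  constructor
  · exact le_of_eq rfl
  · show a i ≤ a i + l; linarith

lemma isCompact_cube (a : Fin n → ℝ) {l : ℝ} (hl : 0 ≤ l) : IsCompact (cube a l) :=
  Metric.isCompact_of_isClosed_isBounded (isClosed_cube a l)
    ((Metric.isBounded_closedBall (x := (WithLp.equiv 2 (Fin n → ℝ)).symm a)
      (r := l * Real.sqrt n)).subset (cube_subset_closedBall hl (corner_mem_cube hl)))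

end JN

namespace JN2
open JN
variable {n : ℕ}

/-- Dyadic subcube of `cube a l` at generation `k` with index `j`. -/
def dcube (a : Fin n → ℝ) (l : ℝ) (k : ℕ) (j : Fin n → ℕ) : Set (EuclideanSpace ℝ (Fin n)) :=
  cube (fun i => a i + j i * (l / 2 ^ k)) (l / 2 ^ k)

lemma dcube_zero (a : Fin n → ℝ) (l : ℝ) : dcube a l 0 (fun _ => 0) = cube a l := by
  simp [dcube]

lemma volume_dcube (a : Fin n → ℝ) (l : ℝ) (k : ℕ) (j : Fin n → ℕ) :
    volume (dcube a l k j) = ENNReal.ofReal (l / 2 ^ k) ^ n := volume_cube _ _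

lemma interval_split {h : ℝ} (hh : 0 < h) :
    ∀ (k : ℕ) (c y : ℝ), y ∈ Icc c (c + 2 ^ k * h) →
      ∃ m : ℕ, m < 2 ^ k ∧ y ∈ Icc (c + m * h) (c + m * h + h) := by
  intro k
  induction k with
  | zero => intro c y hy; exact ⟨0, by norm_num, by simpa using hy⟩
  | succ k ih =>
    intro c y hy
    rcases le_or_gt y (c + 2 ^ k * h) with hc | hc
    · obtain ⟨m, hm, hmem⟩ := ih c y ⟨hy.1, hc⟩
      exact ⟨m, lt_of_lt_of_le hm (Nat.pow_le_pow_right (by norm_num) (Nat.le_succ k)), hmem⟩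
    · obtain ⟨m, hm, hmem⟩ := ih (c + 2 ^ k * h) y
        ⟨hc.le, by rw [add_assoc, ← two_mul, ← mul_assoc, ← pow_succ']; exact hy.2⟩
      refine ⟨2 ^ k + m, ?_, ?_⟩
      · have : (2:ℕ) ^ (k+1) = 2 ^ k + 2 ^ k := by ring
        omega
      · have : c + (↑(2 ^ k + m) : ℝ) * h = c + 2 ^ k * h + m * h := by
          push_cast; ring
        rw [this]; exact hmem

lemma exists_dcube {a : Fin n → ℝ} {l : ℝ} (hl : 0 < l) {x : EuclideanSpace ℝ (Fin n)}
    (hx : x ∈ cube a l) (k : ℕ) :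
    ∃ j : Fin n → ℕ, (∀ i, j i < 2 ^ k) ∧ x ∈ dcube a l k j := by
  have hh : 0 < l / 2 ^ k := by positivity
  have H : ∀ i, ∃ m : ℕ, m < 2 ^ k ∧
      x i ∈ Icc (a i + m * (l / 2 ^ k)) (a i + m * (l / 2 ^ k) + l / 2 ^ k) := by
    intro i
    apply interval_split hh k (a i) (x i)
    have : a i + 2 ^ k * (l / 2 ^ k) = a i + l := by
      field_simp
    rw [this]; exact hx i
  choose j hj1 hj2 using H
  exact ⟨j, hj1, hj2⟩

lemma dcube_subset_cube {a : Fin n → ℝ} {l : ℝ} (hl : 0 ≤ l) {k : ℕ} {j : Fin n → ℕ}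
    (hj : ∀ i, j i < 2 ^ k) : dcube a l k j ⊆ cube a l := by
  intro x hx i
  have h1 := hx i
  simp only [mem_Icc] at h1 ⊢
  have hh : 0 ≤ l / 2 ^ k := by positivity
  have hji : (j i : ℝ) + 1 ≤ 2 ^ k := by
    have := hj i; push_cast; exact_mod_cast Nat.succ_le_of_lt this
  have h2 : (j i : ℝ) * (l / 2 ^ k) + l / 2 ^ k ≤ l := by
    have : ((j i : ℝ) + 1) * (l / 2 ^ k) ≤ 2 ^ k * (l / 2 ^ k) := by
      apply mul_le_mul_of_nonneg_right _ hh
      exact_mod_cast hji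
    have h3 : (2:ℝ) ^ k * (l / 2 ^ k) = l := by field_simp
    nlinarith [this, h3]
  constructor
  · have : 0 ≤ (j i : ℝ) * (l / 2 ^ k) := by positivity
    linarith [h1.1]
  · linarith [h1.2]

lemma dcube_succ_subset {a : Fin n → ℝ} {l : ℝ} (hl : 0 ≤ l) (k : ℕ) (j : Fin n → ℕ) :
    dcube a l (k+1) j ⊆ dcube a l k (fun i => j i / 2) := by
  intro x hx i
  have h1 := hx i
  simp only [mem_Icc] at h1 ⊢
  set h' : ℝ := l / 2 ^ (k+1) with hh'
  have hph : l / 2 ^ k = 2 * h' := by rw [hh']; field_simp; ring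
  have hh'0 : 0 ≤ h' := by positivity
  have key1 : (↑(j i / 2) : ℝ) * 2 ≤ (j i : ℝ) := by
    exact_mod_cast Nat.div_mul_le_self (j i) 2
  have key2 : (j i : ℝ) ≤ (↑(j i / 2) : ℝ) * 2 + 1 := by
    have : j i ≤ j i / 2 * 2 + 1 := by omega
    exact_mod_cast this
  constructor
  · have : a i + (↑(j i / 2) : ℝ) * (l / 2 ^ k) ≤ a i + (j i : ℝ) * h' := by
      rw [hph]; nlinarith
    linarith [h1.1]
  · have : a i + (j i : ℝ) * h' + h' ≤ a i + (↑(j i / 2) : ℝ) * (l / 2 ^ k) + l / 2 ^ k := by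
      rw [hph]; nlinarith
    linarith [h1.2]

lemma dcube_subset_ancestor {a : Fin n → ℝ} {l : ℝ} (hl : 0 ≤ l) (k : ℕ) :
    ∀ (m : ℕ) (j : Fin n → ℕ), dcube a l (k + m) j ⊆ dcube a l k (fun i => j i / 2 ^ m) := by
  intro m
  induction m with
  | zero => intro j; simp
  | succ m ih =>
    intro j
    have h1 : dcube a l (k + (m+1)) j ⊆ dcube a l (k + m) (fun i => j i / 2) :=
      dcube_succ_subset hl (k + m) j
    refine h1.trans ((ih (fun i => j i / 2)).trans ?_)
    have : (fun i => j i / 2 / 2 ^ m) = fun i => j i / 2 ^ (m+1) := by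
      funext i; rw [Nat.div_div_eq_div_mul, ← pow_succ']
    rw [this]

lemma interval_disj {h : ℝ} (hh : 0 ≤ h) {p q : ℕ} (hpq : p < q) {c y : ℝ}
    (h1 : y ∈ Icc (c + p * h) (c + p * h + h)) (h2 : y ∈ Icc (c + q * h) (c + q * h + h)) :
    y = c + q * h := by
  have hq : (p : ℝ) + 1 ≤ q := by exact_mod_cast Nat.succ_le_of_lt hpq
  simp only [mem_Icc] at h1 h2
  have : c + (p : ℝ) * h + h ≤ c + q * h := by nlinarith
  linarith [h1.2, h2.1]

lemma dcube_disj {a : Fin n → ℝ} {l : ℝ} (hl : 0 ≤ l) (k : ℕ) {j j' : Fin n → ℕ}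
    (hjj : j ≠ j') : volume (dcube a l k j ∩ dcube a l k j') = 0 := by
  obtain ⟨i, hi⟩ := Function.ne_iff.mp hjj
  have hh : 0 ≤ l / 2 ^ k := by positivity
  set h : ℝ := l / 2 ^ k
  have hsub : dcube a l k j ∩ dcube a l k j' ⊆
      {x : EuclideanSpace ℝ (Fin n) | x i = a i + (max (j i) (j' i)) * h} := by
    rintro x ⟨hx1, hx2⟩
    rcases lt_or_gt_of_ne hi with hlt | hgt
    · have := interval_disj hh hlt (hx1 i) (hx2 i)
      simp only [mem_setOf_eq, this, Nat.max_eq_right hlt.le]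
    · have := interval_disj hh hgt (hx2 i) (hx1 i)
      simp only [mem_setOf_eq, this, Nat.max_eq_left hgt.le]
  exact measure_mono_null hsub (volume_hyperplane i _)

end JN2

namespace JN3
open JN JN2 Filter
variable {n : ℕ}

lemma closedBall_subset_cube (x : EuclideanSpace ℝ (Fin n)) {ρ : ℝ} (hρ : 0 ≤ ρ) :
    closedBall x ρ ⊆ cube (fun i => x i - ρ) (2 * ρ) := by
  intro y hy i
  have hd : dist (y i) (x i) ≤ ρ := by
    have h1 : dist (y i) (x i) ≤ dist y x := by
      rw [EuclideanSpace.dist_eq]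
      have : dist (y i) (x i) ^ 2 ≤ ∑ i', dist (y i') (x i') ^ 2 :=
        Finset.single_le_sum (f := fun i' => dist (y i') (x i') ^ 2)
          (fun i' _ => sq_nonneg _) (Finset.mem_univ i)
      calc dist (y i) (x i) = Real.sqrt (dist (y i) (x i) ^ 2) :=
            (Real.sqrt_sq dist_nonneg).symm
        _ ≤ _ := Real.sqrt_le_sqrt this
    exact h1.trans (mem_closedBall.mp hy)
  rw [Real.dist_eq] at hd
  have := abs_le.mp hd
  simp only [mem_Icc]
  constructor <;> linarith [this.1, this.2]

/-- Cubes of side `s > 0` containing `x` belong to the Vitali family sets at `x`,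
for the constant `(6 √n)^n`. -/
lemma vitali_const_works (hn : 0 < n) :
    ∀ x : EuclideanSpace ℝ (Fin n), ∃ᶠ r in nhdsWithin 0 (Set.Ioi 0),
      volume (closedBall x (3 * r)) ≤
        (((6 * Real.sqrt n) ^ n : ℝ).toNNReal : ℝ≥0∞) * volume (closedBall x r) := by
  intro x
  apply Filter.Eventually.frequently
  filter_upwards [self_mem_nhdsWithin] with r (hr : r ∈ Set.Ioi (0:ℝ))
  have hr0 : (0:ℝ) ≤ r := le_of_lt hr
  rw [Measure.addHaar_closedBall volume x (by linarith : (0:ℝ) ≤ 3 * r),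
    Measure.addHaar_closedBall volume x hr0]
  rw [show (3 * r) ^ Module.finrank ℝ (EuclideanSpace ℝ (Fin n)) =
      3 ^ Module.finrank ℝ (EuclideanSpace ℝ (Fin n)) * r ^ Module.finrank ℝ (EuclideanSpace ℝ (Fin n)) by
    rw [mul_pow]]
  rw [ENNReal.ofReal_mul (by positivity), ← mul_assoc]
  gcongr
  rw [finrank_euclideanSpace_fin]
  have h1 : ((3:ℝ) ^ n) ≤ (6 * Real.sqrt n) ^ n := by
    apply pow_le_pow_left₀ (by norm_num)
    have : (1:ℝ) ≤ Real.sqrt n := by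
      rw [show (1:ℝ) = Real.sqrt 1 by simp]
      exact Real.sqrt_le_sqrt (by exact_mod_cast hn)
    nlinarith
  calc ENNReal.ofReal (3 ^ n) ≤ ENNReal.ofReal ((6 * Real.sqrt n) ^ n) :=
        ENNReal.ofReal_le_ofReal h1
    _ = (((6 * Real.sqrt n) ^ n : ℝ).toNNReal : ℝ≥0∞) := by
        rw [ENNReal.ofReal]

lemma cube_mem_vitali_setsAt (hn : 0 < n) {b : Fin n → ℝ} {s : ℝ} (hs : 0 < s)
    {x : EuclideanSpace ℝ (Fin n)} (hx : x ∈ cube b s) :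
    cube b s ∈ (Vitali.vitaliFamily volume (((6 * Real.sqrt n) ^ n : ℝ).toNNReal)
      (vitali_const_works hn)).setsAt x := by
  refine ⟨isClosed_cube b s, ?_, s * Real.sqrt n, cube_subset_closedBall hs.le hx, ?_⟩
  · -- nonempty interior
    have hopen : IsOpen {y : EuclideanSpace ℝ (Fin n) | ∀ i, y i ∈ Set.Ioo (b i) (b i + s)} := by
      have : {y : EuclideanSpace ℝ (Fin n) | ∀ i, y i ∈ Set.Ioo (b i) (b i + s)} =
          ⋂ i, (fun y : EuclideanSpace ℝ (Fin n) => y i) ⁻¹' Set.Ioo (b i) (b i + s) := by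
        ext y; simp
      rw [this]
      exact isOpen_iInter_of_finite fun i =>
        IsOpen.preimage (EuclideanSpace.proj (𝕜 := ℝ) i).continuous isOpen_Ioo
    have hne : {y : EuclideanSpace ℝ (Fin n) | ∀ i, y i ∈ Set.Ioo (b i) (b i + s)}.Nonempty := by
      refine ⟨(WithLp.equiv 2 (Fin n → ℝ)).symm (fun i => b i + s / 2), fun i => ?_⟩
      constructor
      · show b i < b i + s / 2; linarith
      · show b i + s / 2 < b i + s; linarith
    have hsub : {y : EuclideanSpace ℝ (Fin n) | ∀ i, y i ∈ Set.Ioo (b i) (b i + s)} ⊆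
        cube b s := fun y hy i => Set.mem_Icc.mpr ⟨(hy i).1.le, (hy i).2.le⟩
    exact hne.mono (hopen.subset_interior_iff.mpr hsub)
  · -- volume comparison
    have h30 : (0:ℝ) ≤ 3 * (s * Real.sqrt n) := by positivity
    calc volume (closedBall x (3 * (s * Real.sqrt n)))
        ≤ volume (cube (fun i => x i - 3 * (s * Real.sqrt n)) (2 * (3 * (s * Real.sqrt n)))) :=
          measure_mono (closedBall_subset_cube x h30)
      _ = ENNReal.ofReal (2 * (3 * (s * Real.sqrt n))) ^ n := volume_cube _ _
      _ = (((6 * Real.sqrt n) ^ n : ℝ).toNNReal : ℝ≥0∞) * volume (cube b s) := by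
          rw [volume_cube]
          rw [show (2 * (3 * (s * Real.sqrt n))) = (6 * Real.sqrt n) * s by ring]
          rw [ENNReal.ofReal_mul (by positivity), mul_pow, ENNReal.ofReal]
          rw [← ENNReal.coe_pow, ← Real.toNNReal_pow (by positivity)]

/-- Lebesgue differentiation along shrinking cubes containing `x`. -/
lemma ae_tendsto_average_cubes (hn : 0 < n) (g : EuclideanSpace ℝ (Fin n) → ℝ)
    (hg : LocallyIntegrable g volume) :
    ∀ᵐ x : EuclideanSpace ℝ (Fin n), ∀ (b : ℕ → Fin n → ℝ) (s : ℕ → ℝ),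
      (∀ k, 0 < s k) → (∀ k, x ∈ cube (b k) (s k)) → Tendsto s atTop (nhds 0) →
      Tendsto (fun k => ⨍ y in cube (b k) (s k), g y) atTop (nhds (g x)) := by
  set v := Vitali.vitaliFamily (volume : Measure (EuclideanSpace ℝ (Fin n)))
    (((6 * Real.sqrt n) ^ n : ℝ).toNNReal) (vitali_const_works hn)
  filter_upwards [v.ae_tendsto_average hg] with x hx b s hs hxmem hs0
  have : Tendsto (fun k => cube (b k) (s k)) atTop (v.filterAt x) := by
    rw [VitaliFamily.tendsto_filterAt_iff]
    constructor
    · exact Eventually.of_forall fun k => cube_mem_vitali_setsAt hn (hs k) (hxmem k)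
    · intro ε hε
      have hten : Tendsto (fun k => s k * Real.sqrt n) atTop (nhds 0) := by
        simpa using hs0.mul_const (Real.sqrt n)
      filter_upwards [hten.eventually_le_const (by positivity : (0:ℝ) < ε)] with k hk
      exact (cube_subset_closedBall (hs k).le (hxmem k)).trans
        (closedBall_subset_closedBall hk)
  exact hx.comp this

end JN3

namespace JN4
open JN JN2 JN3 Filter

variable {n : ℕ} {f : EuclideanSpace ℝ (Fin n) → ℝ}

lemma volume_cube_lt_top (b : Fin n → ℝ) (s : ℝ) : volume (cube b s) < ⊤ := by
  rw [volume_cube]; exact ENNReal.pow_lt_top ENNReal.ofReal_lt_top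

lemma volume_cube_toReal (b : Fin n → ℝ) {s : ℝ} (hs : 0 ≤ s) :
    (volume (cube b s)).toReal = s ^ n := by
  rw [volume_cube, ENNReal.toReal_pow, ENNReal.toReal_ofReal hs]

lemma volume_cube_toReal_pos (b : Fin n → ℝ) {s : ℝ} (hs : 0 < s) :
    0 < (volume (cube b s)).toReal := by
  rw [volume_cube_toReal b hs.le]; positivity

lemma ofReal_volume_cube_toReal (b : Fin n → ℝ) (s : ℝ) :
    ENNReal.ofReal ((volume (cube b s)).toReal) = volume (cube b s) :=
  ENNReal.ofReal_toReal (volume_cube_lt_top b s).ne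

lemma integrableOn_cube (hf : LocallyIntegrable f volume) {b : Fin n → ℝ} {s : ℝ} (hs : 0 ≤ s) :
    IntegrableOn f (cube b s) volume :=
  hf.integrableOn_isCompact (isCompact_cube b hs)

lemma integrableOn_sub_cube (hf : LocallyIntegrable f volume) (c₀ : ℝ) {b : Fin n → ℝ}
    {s : ℝ} (hs : 0 ≤ s) : IntegrableOn (fun x => |f x - c₀|) (cube b s) volume := by
  apply Integrable.abs
  exact (integrableOn_cube hf hs).sub
    (integrableOn_const (volume_cube_lt_top b s).ne)

lemma J_eq (hf : LocallyIntegrable f volume) (c₀ : ℝ) {b : Fin n → ℝ} {s : ℝ} (hs : 0 ≤ s) :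
    ∫⁻ x in cube b s, ENNReal.ofReal |f x - c₀| =
      ENNReal.ofReal (∫ x in cube b s, |f x - c₀|) :=
  (MeasureTheory.ofReal_integral_eq_lintegral_ofReal (integrableOn_sub_cube hf c₀ hs)
    (Filter.Eventually.of_forall fun x => abs_nonneg _)).symm

/-- From the lintegral bound, get the real integral bound. -/
lemma int_bound_of_J_bound (hf : LocallyIntegrable f volume) {c₀ M : ℝ} (hM : 0 ≤ M)
    {b : Fin n → ℝ} {s : ℝ} (hs : 0 ≤ s)
    (hJ : ∫⁻ x in cube b s, ENNReal.ofReal |f x - c₀| ≤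
      ENNReal.ofReal M * volume (cube b s)) :
    ∫ x in cube b s, |f x - c₀| ≤ M * (volume (cube b s)).toReal := by
  rw [J_eq hf c₀ hs, ← ofReal_volume_cube_toReal b s, ← ENNReal.ofReal_mul hM] at hJ
  exact (ENNReal.ofReal_le_ofReal_iff (by positivity)).mp hJ

lemma avg_sub_eq (hf : LocallyIntegrable f volume) (c₀ : ℝ) {b : Fin n → ℝ} {s : ℝ}
    (hs : 0 < s) :
    (⨍ y in cube b s, f y) - c₀ =
      ((volume (cube b s)).toReal)⁻¹ * ∫ x in cube b s, (f x - c₀) := by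
  have hV := volume_cube_toReal_pos b hs
  rw [MeasureTheory.setAverage_eq, MeasureTheory.integral_sub (integrableOn_cube hf hs.le)
    (integrableOn_const (volume_cube_lt_top b s).ne), MeasureTheory.setIntegral_const]
  simp only [smul_eq_mul, measureReal_def]
  field_simp

lemma avg_sub_bound (hf : LocallyIntegrable f volume) {c₀ M : ℝ}
    {b : Fin n → ℝ} {s : ℝ} (hs : 0 < s)
    (hI : ∫ x in cube b s, |f x - c₀| ≤ M * (volume (cube b s)).toReal) :
    |(⨍ y in cube b s, f y) - c₀| ≤ M := by
  have hV := volume_cube_toReal_pos b hs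
  rw [avg_sub_eq hf c₀ hs, abs_mul, abs_inv, abs_of_pos hV]
  have h1 : |∫ x in cube b s, (f x - c₀)| ≤ ∫ x in cube b s, |f x - c₀| := by
    simpa [Real.norm_eq_abs] using
      MeasureTheory.norm_integral_le_integral_norm (μ := volume.restrict (cube b s))
        (fun x => f x - c₀)
  calc ((volume (cube b s)).toReal)⁻¹ * |∫ x in cube b s, (f x - c₀)|
      ≤ ((volume (cube b s)).toReal)⁻¹ * (M * (volume (cube b s)).toReal) := by
        apply mul_le_mul_of_nonneg_left (h1.trans hI) (by positivity)
    _ = M := by field_simp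
    
lemma avg_sub_const (hf : LocallyIntegrable f volume) (c₀ : ℝ) {b : Fin n → ℝ} {s : ℝ}
    (hs : 0 < s) :
    ⨍ y in cube b s, (f y - c₀) = (⨍ y in cube b s, f y) - c₀ := by
  rw [MeasureTheory.setAverage_eq, smul_eq_mul]
  exact (avg_sub_eq hf c₀ hs).symm

lemma int_osc (hf : LocallyIntegrable f volume) {b : Fin n → ℝ} {s : ℝ} (hs : 0 < s) :
    ∫ x in cube b s, |f x - ⨍ y in cube b s, f y| =
      (volume (cube b s)).toReal * oscAvg f b s := by
  have hV := volume_cube_toReal_pos b hs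
  rw [oscAvg]
  set c := ⨍ y in cube b s, f y
  rw [MeasureTheory.setAverage_eq, smul_eq_mul, ← mul_assoc, measureReal_def,
    mul_inv_cancel₀ hV.ne', one_mul]

/-- `J` of a cube relative to its own average is at most `B * volume`. -/
lemma J_self_bound (hf : LocallyIntegrable f volume) {B : ℝ}
    (hosc : ∀ b s, 0 < s → oscAvg f b s ≤ B) {b : Fin n → ℝ} {s : ℝ} (hs : 0 < s) :
    ∫⁻ x in cube b s, ENNReal.ofReal |f x - ⨍ y in cube b s, f y| ≤
      ENNReal.ofReal B * volume (cube b s) := by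
  have hV := volume_cube_toReal_pos b hs
  rw [J_eq hf _ hs.le, int_osc hf hs]
  calc ENNReal.ofReal ((volume (cube b s)).toReal * oscAvg f b s)
      ≤ ENNReal.ofReal (B * (volume (cube b s)).toReal) := by
        apply ENNReal.ofReal_le_ofReal
        rw [mul_comm]
        exact mul_le_mul_of_nonneg_right (hosc b s hs) hV.le
    _ = ENNReal.ofReal B * volume (cube b s) := by
        rw [ENNReal.ofReal_mul' hV.le, ofReal_volume_cube_toReal]

end JN4

namespace JN2
open JN
variable {n : ℕ}

lemma dcube_def (a : Fin n → ℝ) (l : ℝ) (k : ℕ) (j : Fin n → ℕ) :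
    dcube a l k j = cube (fun i => a i + j i * (l / 2 ^ k)) (l / 2 ^ k) := rfl

lemma dcube_inter_mem_hyper {a : Fin n → ℝ} {l : ℝ} (hl : 0 ≤ l) (k : ℕ) {j j' : Fin n → ℕ}
    (hjj : j ≠ j') {x : EuclideanSpace ℝ (Fin n)}
    (hx : x ∈ dcube a l k j ∩ dcube a l k j') :
    ∃ (i : Fin n) (m : ℕ), x i = a i + m * (l / 2 ^ k) := by
  obtain ⟨i, hi⟩ := Function.ne_iff.mp hjj
  have hh : 0 ≤ l / 2 ^ k := by positivity
  rcases lt_or_gt_of_ne hi with hlt | hgt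
  · exact ⟨i, j' i, interval_disj hh hlt (hx.1 i) (hx.2 i)⟩
  · exact ⟨i, j i, interval_disj hh hgt (hx.2 i) (hx.1 i)⟩

lemma dcube_zero' {a : Fin n → ℝ} {l : ℝ} {j : Fin n → ℕ} (hj : ∀ i, j i < 2 ^ 0) :
    dcube a l 0 j = cube a l := by
  have : j = fun _ => 0 := funext fun i => Nat.lt_one_iff.mp (by simpa using hj i)
  rw [this, dcube_zero]

lemma volume_dcube_succ {a : Fin n → ℝ} {l : ℝ} (hl : 0 ≤ l) (k : ℕ) (j j' : Fin n → ℕ) :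
    volume (dcube a l k j) = 2 ^ n * volume (dcube a l (k + 1) j') := by
  rw [volume_dcube, volume_dcube]
  have h2 : l / 2 ^ k = 2 * (l / 2 ^ (k+1)) := by field_simp; ring
  rw [h2, ENNReal.ofReal_mul (by norm_num), mul_pow]
  norm_num

end JN2

namespace JN5
open JN JN2 JN3 JN4 Filter

variable {n : ℕ} {f : EuclideanSpace ℝ (Fin n) → ℝ}

lemma CZ (hn : 0 < n) (hf : LocallyIntegrable f volume) {B : ℝ} (hB : 0 < B)
    (hosc : ∀ b s, 0 < s → oscAvg f b s ≤ B) (a : Fin n → ℝ) {l : ℝ} (hl : 0 < l) :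
    ∃ S : Set (ℕ × (Fin n → ℕ)),
      (∀ p ∈ S, (∀ i, p.2 i < 2 ^ p.1)) ∧
      (∀ p ∈ S, dcube a l p.1 p.2 ⊆ cube a l) ∧
      (S.Pairwise fun p q => volume (dcube a l p.1 p.2 ∩ dcube a l q.1 q.2) = 0) ∧
      (∀ p ∈ S, ENNReal.ofReal (2*B) * volume (dcube a l p.1 p.2) ≤
        ∫⁻ x in dcube a l p.1 p.2, ENNReal.ofReal |f x - ⨍ y in cube a l, f y|) ∧
      (∀ p ∈ S, |(⨍ y in dcube a l p.1 p.2, f y) - ⨍ y in cube a l, f y| ≤ 2^(n+1) * B) ∧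
      volume ({x | x ∈ cube a l ∧ 2*B < |f x - ⨍ y in cube a l, f y|} \
        ⋃ p ∈ S, dcube a l p.1 p.2) = 0 := by
  classical
  set c₀ := ⨍ y in cube a l, f y with hc₀
  set P : ℕ → (Fin n → ℕ) → Prop := fun k j =>
    ENNReal.ofReal (2*B) * volume (dcube a l k j) <
      ∫⁻ x in dcube a l k j, ENNReal.ofReal |f x - c₀| with hP
  set S : Set (ℕ × (Fin n → ℕ)) := {p | (∀ i, p.2 i < 2 ^ p.1) ∧ P p.1 p.2 ∧
    ∀ k' < p.1, ¬ P k' (fun i => p.2 i / 2 ^ (p.1 - k'))} with hS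
  have hJbound : ∀ p ∈ S, ∫⁻ x in dcube a l p.1 p.2, ENNReal.ofReal |f x - c₀| ≤
      ENNReal.ofReal (2^(n+1) * B) * volume (dcube a l p.1 p.2) := by
    rintro ⟨k, j⟩ hp
    match k with
    | 0 =>
      rw [dcube_zero' hp.1]
      calc ∫⁻ x in cube a l, ENNReal.ofReal |f x - c₀| ≤
          ENNReal.ofReal B * volume (cube a l) := J_self_bound hf hosc hl
        _ ≤ ENNReal.ofReal (2^(n+1) * B) * volume (cube a l) := by
            apply mul_le_mul_left
            apply ENNReal.ofReal_le_ofReal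
            nlinarith [one_le_pow₀ (by norm_num : (1:ℝ) ≤ 2) (n := n+1)]
    | k' + 1 =>
      have hnp := hp.2.2 k' (Nat.lt_succ_self k')
      simp only [hP] at hnp
      push_neg at hnp
      have hanc : (fun i => j i / 2 ^ (k' + 1 - k')) = fun i => j i / 2 := by
        funext i; norm_num
      rw [hanc] at hnp
      have hsub : dcube a l (k'+1) j ⊆ dcube a l k' (fun i => j i / 2) :=
        dcube_succ_subset hl.le k' j
      calc ∫⁻ x in dcube a l (k'+1) j, ENNReal.ofReal |f x - c₀|
          ≤ ∫⁻ x in dcube a l k' (fun i => j i / 2), ENNReal.ofReal |f x - c₀| :=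
            lintegral_mono_set hsub
        _ ≤ ENNReal.ofReal (2*B) * volume (dcube a l k' (fun i => j i / 2)) := hnp
        _ = ENNReal.ofReal (2*B) * (2^n * volume (dcube a l (k'+1) j)) := by
            rw [volume_dcube_succ hl.le k' (fun i => j i / 2) j]
        _ = ENNReal.ofReal (2^(n+1) * B) * volume (dcube a l (k'+1) j) := by
            rw [show (2:ℝ)^(n+1) * B = 2^n * (2*B) by ring,
              ENNReal.ofReal_mul (by positivity : (0:ℝ) ≤ 2^n),
              ENNReal.ofReal_pow (by norm_num : (0:ℝ) ≤ 2), ENNReal.ofReal_ofNat]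
            ring
  refine ⟨S, fun p hp => hp.1, fun p hp => dcube_subset_cube hl.le hp.1, ?_, ?_, ?_, ?_⟩
  · -- pairwise
    have key : ∀ p ∈ S, ∀ q ∈ S, p.1 ≤ q.1 → p ≠ q →
        volume (dcube a l p.1 p.2 ∩ dcube a l q.1 q.2) = 0 := by
      intro p hp q hq hk hne
      set m : Fin n → ℕ := fun i => q.2 i / 2 ^ (q.1 - p.1) with hm
      by_cases hmp : m = p.2
      · exfalso
        rcases eq_or_lt_of_le hk with heq | hlt
        · have hm2 : m = q.2 := by funext i; rw [hm]; simp [← heq]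
          exact hne (Prod.ext heq (by rw [← hmp, hm2]))
        · exact (hq.2.2 p.1 hlt) (by rw [← hm, hmp]; exact hp.2.1)
      · have hsub : dcube a l q.1 q.2 ⊆ dcube a l p.1 m := by
          have h1 := dcube_subset_ancestor (a := a) hl.le p.1 (q.1 - p.1) q.2
          rwa [Nat.add_sub_cancel' hk] at h1
        exact measure_mono_null (Set.inter_subset_inter_right _ hsub)
          (dcube_disj hl.le p.1 (fun h => hmp h.symm))
    intro p hp q hq hne
    rcases le_total p.1 q.1 with h | h
    · exact key p hp q hq h hne
    · rw [Set.inter_comm]; exact key q hq p hp h (Ne.symm hne)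
  · exact fun p hp => (hp.2.1).le
  · -- mean bound
    rintro ⟨k, j⟩ hp
    have hs : (0:ℝ) < l / 2 ^ k := by positivity
    have hJ := hJbound ⟨k, j⟩ hp
    rw [dcube_def] at hJ
    show |(⨍ y in cube (fun i => a i + j i * (l / 2 ^ k)) (l / 2 ^ k), f y) - c₀| ≤ 2^(n+1) * B
    exact avg_sub_bound hf hs
      (int_bound_of_J_bound hf (by positivity : (0:ℝ) ≤ 2^(n+1)*B) hs.le hJ)
  · -- null part
    have hgl : LocallyIntegrable (fun x => f x - c₀) volume :=
      hf.sub (locallyIntegrable_const c₀)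
    set N : Set (EuclideanSpace ℝ (Fin n)) := ⋃ (k : ℕ), ⋃ (i : Fin n), ⋃ (m : ℕ),
      {x : EuclideanSpace ℝ (Fin n) | x i = a i + m * (l / 2 ^ k)} with hNdef
    have hN : volume N = 0 := by
      refine measure_iUnion_null fun k => measure_iUnion_null fun i =>
        measure_iUnion_null fun m => volume_hyperplane i _
    have hdiff := ae_tendsto_average_cubes hn _ hgl
    rw [MeasureTheory.ae_iff] at hdiff
    apply measure_mono_null (t := N ∪ {x | ¬ ∀ (b : ℕ → Fin n → ℝ) (s : ℕ → ℝ),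
      (∀ k, 0 < s k) → (∀ k, x ∈ cube (b k) (s k)) → Tendsto s atTop (nhds 0) →
      Tendsto (fun k => ⨍ y in cube (b k) (s k), (fun x => f x - c₀) y) atTop
        (nhds (f x - c₀))})
    swap
    · exact measure_union_null hN hdiff
    rintro x ⟨⟨hxQ, hxBig⟩, hxU⟩
    by_contra hcon
    simp only [Set.mem_union, not_or, Set.mem_setOf_eq, not_not] at hcon
    obtain ⟨hxN, hΦ⟩ := hcon
    choose j hjv hjx using fun k => exists_dcube hl hxQ k
    have hnoP : ∀ k, ¬ P k (j k) := by
      by_contra hcon2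
      push_neg at hcon2
      obtain ⟨k, hk⟩ := hcon2
      have hex : ∃ k, P k (j k) := ⟨k, hk⟩
      set k₀ := Nat.find hex with hk₀
      have hSmem : ((k₀, j k₀) : ℕ × (Fin n → ℕ)) ∈ S := by
        refine ⟨hjv k₀, Nat.find_spec hex, ?_⟩
        intro k' hk'
        have hxanc : x ∈ dcube a l k' (fun i => j k₀ i / 2 ^ (k₀ - k')) := by
          have h1 := dcube_subset_ancestor (a := a) hl.le k' (k₀ - k') (j k₀)
          rw [Nat.add_sub_cancel' hk'.le] at h1
          exact h1 (hjx k₀)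
        have heq : (fun i => j k₀ i / 2 ^ (k₀ - k')) = j k' := by
          by_contra hne
          obtain ⟨i, m, him⟩ := dcube_inter_mem_hyper hl.le k' hne ⟨hxanc, hjx k'⟩
          exact hxN (Set.mem_iUnion.2 ⟨k', Set.mem_iUnion.2 ⟨i, Set.mem_iUnion.2 ⟨m, him⟩⟩⟩)
        rw [heq]
        exact Nat.find_min hex hk'
      exact hxU (Set.mem_biUnion hSmem (hjx k₀))
    -- each average is ≤ 2B in absolute value
    have havg : ∀ k, |⨍ y in dcube a l k (j k), (f y - c₀)| ≤ 2*B := by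
      intro k
      have hs : (0:ℝ) < l / 2 ^ k := by positivity
      have hnp := hnoP k
      simp only [hP] at hnp
      push_neg at hnp
      rw [dcube_def] at hnp
      have hI := int_bound_of_J_bound hf (by positivity : (0:ℝ) ≤ 2*B) hs.le hnp
      have h1 := avg_sub_bound hf hs hI
      rw [dcube_def]
      rw [avg_sub_const hf c₀ hs]
      exact h1
    -- tendsto
    have hten : Tendsto (fun k : ℕ => l / 2 ^ k) atTop (nhds 0) := by
      have h1 : Tendsto (fun k : ℕ => l * (2⁻¹:ℝ) ^ k) atTop (nhds (l * 0)) :=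
        (_root_.tendsto_pow_atTop_nhds_zero_of_lt_one (by norm_num : (0:ℝ) ≤ 2⁻¹) (by norm_num)).const_mul l
      simpa [div_eq_mul_inv, ← inv_pow] using h1
    have hlim := hΦ (fun k => fun i => a i + j k i * (l / 2 ^ k)) (fun k => l / 2 ^ k)
      (fun k => by positivity) (fun k => hjx k) hten
    have := le_of_tendsto hlim.abs (Eventually.of_forall havg)
    rw [hc₀] at hxBig
    linarith [this, hxBig]

end JN5

namespace JN6
open JN JN2 JN3 JN4 JN5 Filter

variable {n : ℕ} {f : EuclideanSpace ℝ (Fin n) → ℝ}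

lemma sum_vol_bound {B : ℝ} (hB : 0 < B) {a : Fin n → ℝ} {l : ℝ} {c₀ : ℝ}
    {S : Set (ℕ × (Fin n → ℕ))}
    (hsubQ : ∀ p ∈ S, dcube a l p.1 p.2 ⊆ cube a l)
    (hpair : S.Pairwise fun p q => volume (dcube a l p.1 p.2 ∩ dcube a l q.1 q.2) = 0)
    (hlow : ∀ p ∈ S, ENNReal.ofReal (2*B) * volume (dcube a l p.1 p.2) ≤
      ∫⁻ x in dcube a l p.1 p.2, ENNReal.ofReal |f x - c₀|) :
    ∑' (p : S), volume (dcube a l p.1.1 p.1.2) ≤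
      (ENNReal.ofReal (2*B))⁻¹ * ∫⁻ x in cube a l, ENNReal.ofReal |f x - c₀| := by
  have h2B0 : ENNReal.ofReal (2*B) ≠ 0 := by
    simp only [ne_eq, ENNReal.ofReal_eq_zero, not_le]; linarith
  have h2Bt : ENNReal.ofReal (2*B) ≠ ⊤ := ENNReal.ofReal_ne_top
  have hSc : S.Countable := S.to_countable
  have hstep : ∀ p : S, volume (dcube a l p.1.1 p.1.2) ≤
      (ENNReal.ofReal (2*B))⁻¹ *
        ∫⁻ x in dcube a l p.1.1 p.1.2, ENNReal.ofReal |f x - c₀| := by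
    intro p
    calc volume (dcube a l p.1.1 p.1.2)
        = (ENNReal.ofReal (2*B))⁻¹ * (ENNReal.ofReal (2*B) * volume (dcube a l p.1.1 p.1.2)) := by
          rw [← mul_assoc, ENNReal.inv_mul_cancel h2B0 h2Bt, one_mul]
      _ ≤ _ := mul_le_mul_right (hlow p.1 p.2) _
  calc ∑' (p : S), volume (dcube a l p.1.1 p.1.2)
      ≤ ∑' (p : S), (ENNReal.ofReal (2*B))⁻¹ *
          ∫⁻ x in dcube a l p.1.1 p.1.2, ENNReal.ofReal |f x - c₀| :=
        ENNReal.tsum_le_tsum hstep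
    _ = (ENNReal.ofReal (2*B))⁻¹ *
          ∑' (p : S), ∫⁻ x in dcube a l p.1.1 p.1.2, ENNReal.ofReal |f x - c₀| :=
        ENNReal.tsum_mul_left
    _ ≤ _ := by
        apply mul_le_mul_right
        rw [← MeasureTheory.lintegral_biUnion₀ (s := fun p : ℕ × (Fin n → ℕ) =>
          dcube a l p.1 p.2) hSc
          (fun p _ => (measurableSet_cube _ _).nullMeasurableSet) hpair]
        exact lintegral_mono_set (Set.iUnion₂_subset hsubQ)

lemma key (hn : 0 < n) (hf : LocallyIntegrable f volume) {B : ℝ} (hB : 0 < B)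
    (hosc : ∀ b s, 0 < s → oscAvg f b s ≤ B) :
    ∀ (k : ℕ) (a : Fin n → ℝ) (l : ℝ), 0 < l →
      volume {x | x ∈ cube a l ∧
          2*B + k * ((2^(n+1)+2)*B) < |f x - ⨍ y in cube a l, f y|} ≤
        (2:ℝ≥0∞)⁻¹ ^ k * ((ENNReal.ofReal (2*B))⁻¹ *
          ∫⁻ x in cube a l, ENNReal.ofReal |f x - ⨍ y in cube a l, f y|) := by
  intro k
  induction k with
  | zero =>
    intro a l hl
    obtain ⟨S, hval, hsubQ, hpair, hlow, hmean, hnull⟩ := CZ hn hf hB hosc a hl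
    set c₀ := ⨍ y in cube a l, f y with hc₀
    set U : Set (EuclideanSpace ℝ (Fin n)) := ⋃ p ∈ S, dcube a l p.1 p.2 with hU
    have hSc : S.Countable := S.to_countable
    have hsum := sum_vol_bound hB hsubQ hpair hlow
    calc volume {x | x ∈ cube a l ∧ 2*B + (0:ℕ) * ((2^(n+1)+2)*B) < |f x - c₀|}
        ≤ volume (({x | x ∈ cube a l ∧ 2*B + (0:ℕ) * ((2^(n+1)+2)*B) < |f x - c₀|}) ∩ U) +
          volume (({x | x ∈ cube a l ∧ 2*B + (0:ℕ) * ((2^(n+1)+2)*B) < |f x - c₀|}) \ U) :=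
          measure_le_inter_add_diff _ _ _
      _ ≤ volume U + 0 := by
          apply add_le_add
          · exact measure_mono Set.inter_subset_right
          · apply le_of_eq
            apply measure_mono_null _ hnull
            apply Set.diff_subset_diff_left
            intro x hx
            refine ⟨hx.1, lt_of_le_of_lt (by simp) hx.2⟩
      _ ≤ (2:ℝ≥0∞)⁻¹ ^ 0 * ((ENNReal.ofReal (2*B))⁻¹ *
            ∫⁻ x in cube a l, ENNReal.ofReal |f x - c₀|) := by
          rw [pow_zero, one_mul, hU, add_zero]
          exact (measure_biUnion_le volume hSc (fun p => dcube a l p.1 p.2)).trans hsum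
  | succ k ih =>
    intro a l hl
    obtain ⟨S, hval, hsubQ, hpair, hlow, hmean, hnull⟩ := CZ hn hf hB hosc a hl
    set c₀ := ⨍ y in cube a l, f y with hc₀
    set U : Set (EuclideanSpace ℝ (Fin n)) := ⋃ p ∈ S, dcube a l p.1 p.2 with hU
    have hSc : S.Countable := S.to_countable
    have hsum := sum_vol_bound hB hsubQ hpair hlow
    set Bad : Set (EuclideanSpace ℝ (Fin n)) :=
      {x | x ∈ cube a l ∧ 2*B + (k+1:ℕ) * ((2^(n+1)+2)*B) < |f x - c₀|} with hBad
    have hincl : ∀ p ∈ S, Bad ∩ dcube a l p.1 p.2 ⊆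
        {x | x ∈ dcube a l p.1 p.2 ∧
          2*B + k * ((2^(n+1)+2)*B) < |f x - ⨍ y in dcube a l p.1 p.2, f y|} := by
      intro p hp x hx
      refine ⟨hx.2, ?_⟩
      have h1 := hx.1.2
      have h2 := hmean p hp
      have h3 : |f x - ⨍ y in dcube a l p.1 p.2, f y| ≥
          |f x - c₀| - |(⨍ y in dcube a l p.1 p.2, f y) - c₀| := by
        have habs := abs_sub_abs_le_abs_sub (f x - c₀)
          ((⨍ y in dcube a l p.1 p.2, f y) - c₀)
        have heq : (f x - c₀) - ((⨍ y in dcube a l p.1 p.2, f y) - c₀) =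
            f x - ⨍ y in dcube a l p.1 p.2, f y := by ring
        rw [heq] at habs
        linarith [habs]
      have hcast : ((k+1:ℕ) : ℝ) = (k:ℝ) + 1 := by push_cast; ring
      rw [hcast] at h1
      nlinarith [h1, h2, h3, hB]
    have hpiece : ∀ p ∈ S, volume (Bad ∩ dcube a l p.1 p.2) ≤
        (2:ℝ≥0∞)⁻¹ ^ k * (2:ℝ≥0∞)⁻¹ * volume (dcube a l p.1 p.2) := by
      intro p hp
      have hs : (0:ℝ) < l / 2 ^ p.1 := by positivity
      have hih := ih (fun i => a i + p.2 i * (l / 2 ^ p.1)) (l / 2 ^ p.1) hs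
      have hself := J_self_bound hf hosc (b := fun i => a i + p.2 i * (l / 2 ^ p.1)) hs
      calc volume (Bad ∩ dcube a l p.1 p.2)
          ≤ volume {x | x ∈ cube (fun i => a i + p.2 i * (l / 2 ^ p.1)) (l / 2 ^ p.1) ∧
              2*B + k * ((2^(n+1)+2)*B) <
                |f x - ⨍ y in cube (fun i => a i + p.2 i * (l / 2 ^ p.1)) (l / 2 ^ p.1), f y|} := by
            apply measure_mono
            have h4 := hincl p hp
            rwa [dcube_def] at h4
        _ ≤ (2:ℝ≥0∞)⁻¹ ^ k * ((ENNReal.ofReal (2*B))⁻¹ *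
              ∫⁻ x in cube (fun i => a i + p.2 i * (l / 2 ^ p.1)) (l / 2 ^ p.1),
                ENNReal.ofReal |f x - ⨍ y in cube (fun i => a i + p.2 i *
                  (l / 2 ^ p.1)) (l / 2 ^ p.1), f y|) := hih
        _ ≤ (2:ℝ≥0∞)⁻¹ ^ k * ((ENNReal.ofReal (2*B))⁻¹ *
              (ENNReal.ofReal B *
                volume (cube (fun i => a i + p.2 i * (l / 2 ^ p.1)) (l / 2 ^ p.1)))) := by
            apply mul_le_mul_right
            exact mul_le_mul_right hself _
        _ = (2:ℝ≥0∞)⁻¹ ^ k * (2:ℝ≥0∞)⁻¹ * volume (dcube a l p.1 p.2) := by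
            rw [dcube_def, mul_assoc]
            congr 1
            rw [← mul_assoc]
            congr 1
            rw [ENNReal.ofReal_mul (by norm_num : (0:ℝ) ≤ 2),
              ENNReal.ofReal_ofNat,
              ENNReal.mul_inv (Or.inr (ENNReal.ofReal_ne_top)) (Or.inl (by norm_num)),
              mul_assoc, ENNReal.inv_mul_cancel
                (by simp only [ne_eq, ENNReal.ofReal_eq_zero, not_le]; linarith)
                ENNReal.ofReal_ne_top, mul_one]
    calc volume Bad ≤ volume (Bad ∩ U) + volume (Bad \ U) := measure_le_inter_add_diff _ _ _
      _ ≤ (∑' (p : S), volume (Bad ∩ dcube a l p.1.1 p.1.2)) + 0 := by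
          apply add_le_add
          · rw [hU, Set.inter_iUnion₂]
            exact measure_biUnion_le volume hSc _
          · apply le_of_eq
            apply measure_mono_null _ hnull
            apply Set.diff_subset_diff_left
            intro x hx
            refine ⟨hx.1, lt_of_le_of_lt ?_ hx.2⟩
            have h5 : (0:ℝ) ≤ (k+1:ℕ) * ((2^(n+1)+2)*B) := by positivity
            linarith
      _ ≤ (∑' (p : S), (2:ℝ≥0∞)⁻¹ ^ k * (2:ℝ≥0∞)⁻¹ * volume (dcube a l p.1.1 p.1.2)) + 0 := by
          apply add_le_add_left
          exact ENNReal.tsum_le_tsum fun p => hpiece p.1 p.2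
      _ = (2:ℝ≥0∞)⁻¹ ^ k * (2:ℝ≥0∞)⁻¹ * ∑' (p : S), volume (dcube a l p.1.1 p.1.2) := by
          rw [add_zero, ENNReal.tsum_mul_left]
      _ ≤ (2:ℝ≥0∞)⁻¹ ^ (k+1) * ((ENNReal.ofReal (2*B))⁻¹ *
            ∫⁻ x in cube a l, ENNReal.ofReal |f x - c₀|) := by
          rw [pow_succ]
          exact mul_le_mul_right hsum _

end JN6

open JN JN2 JN3 JN4 JN5 JN6 Filter in
/-- **John–Nirenberg inequality.** There are constants `c, C > 0` depending only on `n` such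
that if `f ∈ BMO(ℝⁿ)` with `‖f‖_{BMO} > 0`, then for every cube `Q ⊆ ℝⁿ` and every
`α ≥ ‖f‖_{BMO}`,
`|{x ∈ Q : |f x - f_Q| > α}| ≤ (C/‖f‖_{BMO}) e^{-cα/‖f‖_{BMO}} ∫_Q |f - f_Q|`. -/
theorem john_nirenberg (n : ℕ) (hn : 0 < n) :
    ∃ c C : ℝ, 0 < c ∧ 0 < C ∧
      ∀ f : EuclideanSpace ℝ (Fin n) → ℝ, LocallyIntegrable f volume →
        BddAbove {r : ℝ | ∃ a l, 0 < l ∧ r = oscAvg f a l} →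
        0 < bmoSeminorm f →
        ∀ (a : Fin n → ℝ) (l : ℝ), 0 < l → ∀ α : ℝ, bmoSeminorm f ≤ α →
          volume {x | x ∈ cube a l ∧ α < |f x - ⨍ y in cube a l, f y|} ≤
            ENNReal.ofReal ((C / bmoSeminorm f) * Real.exp (-c * α / bmoSeminorm f) *
              ∫ x in cube a l, |f x - ⨍ y in cube a l, f y|) := by
  have hσ6 : (6:ℝ) ≤ 2^(n+1) + 2 := by
    have : (2:ℝ)^2 ≤ 2^(n+1) := pow_le_pow_right₀ (by norm_num) (by omega)
    norm_num at this ⊢; linarith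
  have hσpos : (0:ℝ) < 2^(n+1) + 2 := by positivity
  have hlog2 : (0:ℝ) < Real.log 2 := Real.log_pos (by norm_num)
  refine ⟨Real.log 2 / (2^(n+1) + 2), 8, by positivity, by norm_num, ?_⟩
  intro f hf hbdd hpos a l hl α hα
  set B := bmoSeminorm f with hBdef
  set c : ℝ := Real.log 2 / (2^(n+1) + 2) with hcdef
  have hosc : ∀ b s, 0 < s → oscAvg f b s ≤ B := fun b s hs =>
    le_csSup hbdd ⟨b, s, hs, rfl⟩
  set c₀ := ⨍ y in cube a l, f y with hc₀
  have hJQ : ∫⁻ x in cube a l, ENNReal.ofReal |f x - c₀| =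
      ENNReal.ofReal (∫ x in cube a l, |f x - c₀|) := J_eq hf c₀ hl.le
  have hInt : (0:ℝ) ≤ ∫ x in cube a l, |f x - c₀| :=
    MeasureTheory.integral_nonneg fun x => abs_nonneg _
  have hexp8 : (1:ℝ) ≤ 8 * Real.exp (-c * α / B) ∨ True := Or.inr trivial
  rcases le_or_gt (2*B) α with h2B | h2B
  · -- main case via key lemma
    set k : ℕ := ⌊(α - 2*B) / ((2^(n+1)+2)*B)⌋₊ with hkdef
    have hden : (0:ℝ) < (2^(n+1)+2)*B := by positivity
    have hrat0 : (0:ℝ) ≤ (α - 2*B) / ((2^(n+1)+2)*B) := by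
      apply div_nonneg (by linarith) hden.le
    have hk1 : 2*B + k * ((2^(n+1)+2)*B) ≤ α := by
      have h1 : (k:ℝ) ≤ (α - 2*B) / ((2^(n+1)+2)*B) := Nat.floor_le hrat0
      have h2 : (k:ℝ) * ((2^(n+1)+2)*B) ≤ α - 2*B := (le_div_iff₀ hden).mp h1
      linarith
    have hsubset : {x | x ∈ cube a l ∧ α < |f x - c₀|} ⊆
        {x | x ∈ cube a l ∧ 2*B + k * ((2^(n+1)+2)*B) < |f x - c₀|} :=
      fun x hx => ⟨hx.1, lt_of_le_of_lt hk1 hx.2⟩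
    have hkey := key hn hf hpos hosc k a l hl
    -- convert RHS of key into ofReal form
    have hofreal : (2:ℝ≥0∞)⁻¹ ^ k * ((ENNReal.ofReal (2*B))⁻¹ *
        ∫⁻ x in cube a l, ENNReal.ofReal |f x - c₀|) =
        ENNReal.ofReal ((1/2:ℝ)^k * ((2*B)⁻¹ * ∫ x in cube a l, |f x - c₀|)) := by
      rw [hJQ]
      rw [ENNReal.ofReal_mul (by positivity : (0:ℝ) ≤ (1/2:ℝ)^k),
        ENNReal.ofReal_mul (by positivity : (0:ℝ) ≤ (2*B)⁻¹)]
      congr 1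
      · rw [ENNReal.ofReal_pow (by norm_num : (0:ℝ) ≤ (1/2:ℝ))]
        congr 1
        rw [one_div, ENNReal.ofReal_inv_of_pos (by norm_num : (0:ℝ) < 2)]
        norm_num
      · congr 1
        rw [ENNReal.ofReal_inv_of_pos (by positivity : (0:ℝ) < 2*B)]
    -- real inequality
    have hreal : (1/2:ℝ)^k * ((2*B)⁻¹ * ∫ x in cube a l, |f x - c₀|) ≤
        (8 / B) * Real.exp (-c * α / B) * ∫ x in cube a l, |f x - c₀| := by
      have hkge : (α - 2*B) / ((2^(n+1)+2)*B) < (k:ℝ) + 1 := Nat.lt_floor_add_one _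
      have hhalf : (1/2:ℝ)^k = Real.exp (-(k * Real.log 2)) := by
        rw [Real.exp_neg, Real.exp_nat_mul, Real.exp_log (by norm_num : (0:ℝ) < 2),
          one_div, inv_pow]
      have hexp_bound : Real.exp (-(k * Real.log 2)) ≤
          4 * Real.exp (-c * α / B) := by
        have h3 : -(k * Real.log 2) ≤ -c * α / B + 2 * Real.log 2 := by
          have h4 : (α - 2*B)/((2^(n+1)+2)*B) * Real.log 2 =
              (Real.log 2 / (2^(n+1)+2)) * (α / B) - (2 * Real.log 2) / (2^(n+1)+2) := by
            field_simp
          have h5 : ((k:ℝ)) * Real.log 2 ≥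
              ((α - 2*B)/((2^(n+1)+2)*B) - 1) * Real.log 2 :=
            mul_le_mul_of_nonneg_right (by linarith) hlog2.le
          have h6 : (2 * Real.log 2) / (2^(n+1)+2) ≤ Real.log 2 := by
            rw [div_le_iff₀ hσpos]
            nlinarith [hlog2.le]
          have h7 : -c * α / B = -(Real.log 2 / (2^(n+1)+2) * (α / B)) := by
            rw [hcdef]; field_simp
          rw [h7]
          nlinarith [h4, h5, h6]
        calc Real.exp (-(k * Real.log 2)) ≤ Real.exp (-c * α / B + 2 * Real.log 2) :=
              Real.exp_le_exp.mpr h3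
          _ = Real.exp (-c * α / B) * Real.exp (2 * Real.log 2) := Real.exp_add _ _
          _ = 4 * Real.exp (-c * α / B) := by
              rw [show (2:ℝ) * Real.log 2 = Real.log 2 + Real.log 2 by ring, Real.exp_add,
                Real.exp_log (by norm_num : (0:ℝ) < 2)]
              ring
      have hfac : (1/2:ℝ)^k * (2*B)⁻¹ ≤ (8 / B) * Real.exp (-c * α / B) := by
        rw [hhalf]
        calc Real.exp (-(k * Real.log 2)) * (2*B)⁻¹ ≤
            (4 * Real.exp (-c * α / B)) * (2*B)⁻¹ :=
              mul_le_mul_of_nonneg_right hexp_bound (by positivity)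
          _ ≤ (8 / B) * Real.exp (-c * α / B) := by
              rw [mul_inv, div_eq_mul_inv 8 B]
              have hBinv : (0:ℝ) ≤ B⁻¹ := inv_nonneg.mpr hpos.le
              nlinarith [mul_nonneg (Real.exp_nonneg (-c * α / B)) hBinv]
      calc (1/2:ℝ)^k * ((2*B)⁻¹ * ∫ x in cube a l, |f x - c₀|)
          = ((1/2:ℝ)^k * (2*B)⁻¹) * ∫ x in cube a l, |f x - c₀| := by ring
        _ ≤ (8 / B) * Real.exp (-c * α / B) * ∫ x in cube a l, |f x - c₀| :=
            mul_le_mul_of_nonneg_right hfac hInt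
    calc volume {x | x ∈ cube a l ∧ α < |f x - c₀|}
        ≤ volume {x | x ∈ cube a l ∧ 2*B + k * ((2^(n+1)+2)*B) < |f x - c₀|} :=
          measure_mono hsubset
      _ ≤ (2:ℝ≥0∞)⁻¹ ^ k * ((ENNReal.ofReal (2*B))⁻¹ *
            ∫⁻ x in cube a l, ENNReal.ofReal |f x - c₀|) := hkey
      _ = ENNReal.ofReal ((1/2:ℝ)^k * ((2*B)⁻¹ * ∫ x in cube a l, |f x - c₀|)) := hofreal
      _ ≤ ENNReal.ofReal ((8 / B) * Real.exp (-c * α / B) * ∫ x in cube a l, |f x - c₀|) := by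
          apply ENNReal.ofReal_le_ofReal
          rw [← mul_assoc] at hreal ⊢
          linarith [hreal]
  · -- Chebyshev case: B ≤ α < 2B
    have hαpos : 0 < α := lt_of_lt_of_le hpos hα
    have hm : AEMeasurable (fun x => ENNReal.ofReal |f x - c₀|)
        (volume.restrict (cube a l)) := by
      have h1 : AEStronglyMeasurable (fun x => f x - c₀) volume :=
        hf.aestronglyMeasurable.sub aestronglyMeasurable_const
      have h2 : AEMeasurable (fun x => |f x - c₀|) volume := by
        have := h1.norm.aemeasurable
        simpa [Real.norm_eq_abs] using this
      exact ENNReal.measurable_ofReal.comp_aemeasurable h2.restrict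
    have hcheb := MeasureTheory.mul_meas_ge_le_lintegral₀ hm (ENNReal.ofReal α)
    have hssub : {x | x ∈ cube a l ∧ α < |f x - c₀|} ⊆
        {x | ENNReal.ofReal α ≤ ENNReal.ofReal |f x - c₀|} ∩ cube a l := by
      intro x hx
      exact ⟨ENNReal.ofReal_le_ofReal hx.2.le, hx.1⟩
    have hα0 : ENNReal.ofReal α ≠ 0 := by
      simp only [ne_eq, ENNReal.ofReal_eq_zero, not_le]; linarith
    have hαt : ENNReal.ofReal α ≠ ⊤ := ENNReal.ofReal_ne_top
    have hvol : volume {x | x ∈ cube a l ∧ α < |f x - c₀|} ≤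
        (ENNReal.ofReal α)⁻¹ * ∫⁻ x in cube a l, ENNReal.ofReal |f x - c₀| := by
      calc volume {x | x ∈ cube a l ∧ α < |f x - c₀|}
          ≤ (volume.restrict (cube a l)) {x | ENNReal.ofReal α ≤ ENNReal.ofReal |f x - c₀|} := by
            rw [Measure.restrict_apply' (measurableSet_cube a l)]
            exact measure_mono hssub
        _ = (ENNReal.ofReal α)⁻¹ * (ENNReal.ofReal α *
              (volume.restrict (cube a l)) {x | ENNReal.ofReal α ≤ ENNReal.ofReal |f x - c₀|}) := by
            rw [← mul_assoc, ENNReal.inv_mul_cancel hα0 hαt, one_mul]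
        _ ≤ _ := mul_le_mul_right hcheb _
    calc volume {x | x ∈ cube a l ∧ α < |f x - c₀|}
        ≤ (ENNReal.ofReal α)⁻¹ * ∫⁻ x in cube a l, ENNReal.ofReal |f x - c₀| := hvol
      _ = ENNReal.ofReal (α⁻¹ * ∫ x in cube a l, |f x - c₀|) := by
          rw [hJQ, ENNReal.ofReal_mul (by positivity : (0:ℝ) ≤ α⁻¹),
            ENNReal.ofReal_inv_of_pos hαpos]
      _ ≤ ENNReal.ofReal ((8 / B) * Real.exp (-c * α / B) * ∫ x in cube a l, |f x - c₀|) := by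
          apply ENNReal.ofReal_le_ofReal
          apply mul_le_mul_of_nonneg_right _ hInt
          -- α⁻¹ ≤ (8/B) * exp(-cα/B)
          have hcα : c * α / B ≤ Real.log 2 := by
            rw [hcdef]
            rw [div_mul_eq_mul_div, div_div]
            rw [div_le_iff₀ (by positivity)]
            have hαle : α ≤ 2*B := h2B.le
            have : Real.log 2 * α ≤ Real.log 2 * (2*B) :=
              mul_le_mul_of_nonneg_left hαle hlog2.le
            nlinarith [this, mul_nonneg (mul_nonneg
              (sub_nonneg.mpr (by linarith : (2:ℝ) ≤ 2^(n+1)+2)) hpos.le) hlog2.le]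
          have hexp : Real.exp (-c * α / B) ≥ 1/2 := by
            rw [show -c * α / B = -(c * α / B) by ring]
            rw [ge_iff_le, show (1/2:ℝ) = (Real.exp (Real.log 2))⁻¹ by
              rw [Real.exp_log (by norm_num : (0:ℝ) < 2)]; norm_num,
              ← Real.exp_neg]
            exact Real.exp_le_exp.mpr (by linarith)
          have hαB : α⁻¹ ≤ B⁻¹ := by
            apply inv_anti₀ hpos hα
          calc α⁻¹ ≤ B⁻¹ := hαB
            _ ≤ (8 / B) * (1/2) := by
                rw [div_eq_mul_inv]
                nlinarith [inv_nonneg.mpr hpos.le]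
            _ ≤ (8 / B) * Real.exp (-c * α / B) := by
                apply mul_le_mul_of_nonneg_left hexp (by positivity)
end
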